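/- arXiv:math/0605395 — 2 statements merged into one kernel-verified Lean document; each statement's English description precedes it below -/
import Mathlib

section
/- Let η ∈ D_r with k(η) ≥ 1 and suppose e^{2a(n)} = c n^{−d/k(η)} for a fixed constant c > 0, with b a fixed real. Let R ≥ r be an integer and ζ ∈ D_R a local configuration of radius R. Then there exists a constant M_1 > 0 such that for all admissible n, the expected number of copies of ζ satisfies E_{a(n),b}[X_n(ζ)] ≤ M_1 e^{2a(n)(k(ζ) − k(η))}. -/
open scoped ENNReal BigOperators
open Filter

namespace Ising

noncomputable section

/-- The `L_p` norm (`1 ≤ p ≤ ∞`) of an integer vector, via the `PiLp` norm on `ℝ^d`. -/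
def lpNorm (p : ℝ≥0∞) [Fact (1 ≤ p)] {d : ℕ} (z : Fin d → ℤ) : ℝ :=
  ‖(WithLp.equiv p (Fin d → ℝ)).symm (fun i => (z i : ℝ))‖

lemma lpNorm_neg (p : ℝ≥0∞) [Fact (1 ≤ p)] {d : ℕ} (z : Fin d → ℤ) :
    lpNorm p (fun i => -(z i)) = lpNorm p z := by
  unfold lpNorm
  have h : ((WithLp.equiv p (Fin d → ℝ)).symm (fun i => ((-(z i) : ℤ) : ℝ)))
      = -((WithLp.equiv p (Fin d → ℝ)).symm fun i => ((z i : ℤ) : ℝ)) := by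
    have : (fun i => ((-(z i) : ℤ) : ℝ)) = -(fun i => ((z i : ℤ) : ℝ)) := by
      funext i; simp
    rw [this]; rfl
  rw [h, norm_neg]

/-- Vertex set of the `d`-dimensional lattice torus of size `n`:
`{0, …, n-1}^d` with componentwise arithmetic modulo `n`. -/
abbrev Vtx (d n : ℕ) := Fin d → ZMod n

/-- Configurations: a spin (`true` = `+1`, `false` = `-1`) at each vertex. -/
abbrev Conf (d n : ℕ) := Vtx d n → Bool

/-- The spin value (`±1`) of a Boolean. -/
def spin (s : Bool) : ℝ := if s then 1 else -1

/-- The lattice torus `G_n`: distinct vertices `x, y` are adjacent iff `y - x`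
(componentwise modulo `n`) admits an integer representative `z` with `‖z‖_p ≤ ρ`. -/
def torus (d ρ : ℕ) (p : ℝ≥0∞) [Fact (1 ≤ p)] (n : ℕ) : SimpleGraph (Vtx d n) where
  Adj x y := x ≠ y ∧ ∃ z : Fin d → ℤ,
    (∀ i, ((z i : ZMod n) = y i - x i)) ∧ lpNorm p z ≤ (ρ : ℝ)
  symm := by
    constructor
    rintro x y ⟨hxy, z, hz, hn⟩
    refine ⟨hxy.symm, fun i => -(z i), fun i => ?_, by rw [lpNorm_neg]; exact hn⟩
    push_cast
    rw [hz i]; ring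
  loopless := ⟨fun x h => h.1 rfl⟩

/-- The corresponding (infinite) lattice graph on `ℤ^d`, used as a reference to define
local configurations: distinct `x, y` are adjacent iff `‖y - x‖_p ≤ ρ`. -/
def latticeZ (d ρ : ℕ) (p : ℝ≥0∞) [Fact (1 ≤ p)] : SimpleGraph (Fin d → ℤ) where
  Adj x y := x ≠ y ∧ lpNorm p (fun i => y i - x i) ≤ (ρ : ℝ)
  symm := by
    constructor
    rintro x y ⟨hxy, hn⟩
    refine ⟨hxy.symm, ?_⟩
    have h : (fun i => x i - y i) = (fun i => -(y i - x i)) := by funext i; ring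
    rw [h, lpNorm_neg]; exact hn
  loopless := ⟨fun x h => h.1 rfl⟩

/-- The ball `B(x,r)` of center `x` and radius `r` for the graph distance. -/
def gball {V : Type*} (G : SimpleGraph V) (x : V) (r : ℕ) : Set V :=
  {y | G.Reachable x y ∧ G.dist x y ≤ r}

/-- The reference ball `B(0,r)` (in `ℤ^d`). -/
def refBall (d ρ : ℕ) (p : ℝ≥0∞) [Fact (1 ≤ p)] (r : ℕ) : Set (Fin d → ℤ) :=
  gball (latticeZ d ρ p) 0 r

/-- A local configuration of radius `r`: an element of `D_r = {-1,+1}^{B(0,r)}`. -/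
abbrev LocalConfig (d ρ : ℕ) (p : ℝ≥0∞) [Fact (1 ≤ p)] (r : ℕ) :=
  ↥(refBall d ρ p r) → Bool

/-- `k(η)`: the number of positive vertices of a local configuration `η`. -/
def kOf (d ρ : ℕ) (p : ℝ≥0∞) [Fact (1 ≤ p)] (r : ℕ) (η : LocalConfig d ρ p r) : ℕ :=
  Set.ncard {v : ↥(refBall d ρ p r) | η v = true}

/-- The common degree of the vertices (number of neighbors of `0` in the lattice). -/
def degZ (d ρ : ℕ) (p : ℝ≥0∞) [Fact (1 ≤ p)] : ℕ :=
  Set.ncard {z : Fin d → ℤ | (latticeZ d ρ p).Adj 0 z}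

/-- The perimeter `γ(η) = V·k(η) - 2·#{edges with both endpoints positive}`; the
number of ordered adjacent pairs of positive vertices is twice the number of such edges. -/
def perim (d ρ : ℕ) (p : ℝ≥0∞) [Fact (1 ≤ p)] (r : ℕ) (η : LocalConfig d ρ p r) : ℕ :=
  degZ d ρ p * kOf d ρ p r η -
    Set.ncard {q : ↥(refBall d ρ p r) × ↥(refBall d ρ p r) |
      (latticeZ d ρ p).Adj q.1.1 q.2.1 ∧ η q.1 = true ∧ η q.2 = true}

/-- `η` is clean if every vertex at graph distance exactly `r` from `0` is negative. -/
def Clean (d ρ : ℕ) (p : ℝ≥0∞) [Fact (1 ≤ p)] (r : ℕ) (η : LocalConfig d ρ p r) : Prop :=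
  ∀ v : ↥(refBall d ρ p r), (latticeZ d ρ p).dist 0 v.1 = r → η v = false

/-- The translate `η_x` of `η` occurs at `x` in the configuration `σ`. -/
def occursAt (d ρ : ℕ) (p : ℝ≥0∞) [Fact (1 ≤ p)] (r n : ℕ) (η : LocalConfig d ρ p r)
    (x : Vtx d n) (σ : Conf d n) : Prop :=
  ∀ v : ↥(refBall d ρ p r), σ (x + fun i => ((v.1 i : ZMod n))) = η v

/-- The indicator `I_x^η` (as a real number). -/
def occInd (d ρ : ℕ) (p : ℝ≥0∞) [Fact (1 ≤ p)] (r n : ℕ) (η : LocalConfig d ρ p r)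
    (x : Vtx d n) (σ : Conf d n) : ℝ := by
  classical exact if occursAt d ρ p r n η x σ then 1 else 0

/-- `X_n(η) = Σ_x I_x^η`: the number of copies of `η` in `G_n`. -/
def Xcount (d ρ : ℕ) (p : ℝ≥0∞) [Fact (1 ≤ p)] (r n : ℕ) (η : LocalConfig d ρ p r)
    (σ : Conf d n) : ℕ :=
  Set.ncard {x : Vtx d n | occursAt d ρ p r n η x σ}

/-- The interaction term `Σ_{{x,y} ∈ E_n} σ(x)σ(y)`. -/
def pairSum (d ρ : ℕ) (p : ℝ≥0∞) [Fact (1 ≤ p)] (n : ℕ) (σ : Conf d n) : ℝ :=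
  ∑' e : ↥(torus d ρ p n).edgeSet,
    Sym2.lift ⟨fun x y => spin (σ x) * spin (σ y), fun _ _ => mul_comm _ _⟩
      (e : Sym2 (Vtx d n))

/-- The Hamiltonian `a Σ_x σ(x) + b Σ_{{x,y} ∈ E_n} σ(x)σ(y)`. -/
def hamiltonian (d ρ : ℕ) (p : ℝ≥0∞) [Fact (1 ≤ p)] (n : ℕ) (a b : ℝ) (σ : Conf d n) : ℝ :=
  a * (∑' x : Vtx d n, spin (σ x)) + b * pairSum d ρ p n σ

/-- The (unnormalized) Gibbs weight of a configuration. -/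
def weight (d ρ : ℕ) (p : ℝ≥0∞) [Fact (1 ≤ p)] (n : ℕ) (a b : ℝ) (σ : Conf d n) : ℝ :=
  Real.exp (hamiltonian d ρ p n a b σ)

/-- The partition function `Z_{a,b}`. -/
def partZ (d ρ : ℕ) (p : ℝ≥0∞) [Fact (1 ≤ p)] (n : ℕ) (a b : ℝ) : ℝ :=
  ∑' σ : Conf d n, weight d ρ p n a b σ

/-- The Ising (Gibbs) probability `μ_{a,b}(A)` of an event `A ⊆ X_n`. -/
def prob (d ρ : ℕ) (p : ℝ≥0∞) [Fact (1 ≤ p)] (n : ℕ) (a b : ℝ) (A : Set (Conf d n)) : ℝ :=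
  (∑' σ : ↥A, weight d ρ p n a b (σ : Conf d n)) / partZ d ρ p n a b

/-- The expectation `E_{a,b}[f]`. -/
def expect (d ρ : ℕ) (p : ℝ≥0∞) [Fact (1 ≤ p)] (n : ℕ) (a b : ℝ) (f : Conf d n → ℝ) : ℝ :=
  (∑' σ : Conf d n, weight d ρ p n a b σ * f σ) / partZ d ρ p n a b

/-- The variance `Var_{a,b}[f]`. -/
def varE (d ρ : ℕ) (p : ℝ≥0∞) [Fact (1 ≤ p)] (n : ℕ) (a b : ℝ) (f : Conf d n → ℝ) : ℝ :=
  expect d ρ p n a b (fun σ => (f σ - expect d ρ p n a b f) ^ 2)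

/-- The event `{I_x^η = 1}`. -/
def event (d ρ : ℕ) (p : ℝ≥0∞) [Fact (1 ≤ p)] (r n : ℕ) (η : LocalConfig d ρ p r)
    (x : Vtx d n) : Set (Conf d n) :=
  {σ | occursAt d ρ p r n η x σ}

/-- The event that a configuration agrees with `σ₀` on `W`. -/
def agreeOn (d n : ℕ) (W : Set (Vtx d n)) (σ₀ : Conf d n) : Set (Conf d n) :=
  {τ | ∀ x ∈ W, τ x = σ₀ x}

/-- The conditional probability `μ_{a,b}(A | σ₀ on W)`. -/
def condProb (d ρ : ℕ) (p : ℝ≥0∞) [Fact (1 ≤ p)] (n : ℕ) (a b : ℝ) (A : Set (Conf d n))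
    (W : Set (Vtx d n)) (σ₀ : Conf d n) : ℝ :=
  prob d ρ p n a b (A ∩ agreeOn d n W σ₀) / prob d ρ p n a b (agreeOn d n W σ₀)

/-- The exterior boundary `δV` of a set of vertices of the torus. -/
def boundary (d ρ : ℕ) (p : ℝ≥0∞) [Fact (1 ≤ p)] (n : ℕ) (V : Set (Vtx d n)) :
    Set (Vtx d n) :=
  {y | y ∉ V ∧ ∃ x ∈ V, (torus d ρ p n).Adj x y}

/-- The ball `B(x,R)` in the torus. -/
def tball (d ρ : ℕ) (p : ℝ≥0∞) [Fact (1 ≤ p)] (n : ℕ) (x : Vtx d n) (R : ℕ) :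
    Set (Vtx d n) :=
  gball (torus d ρ p n) x R

/-- The distribution (probability mass function on `ℕ`) of an integer-valued observable. -/
def lawOf (d ρ : ℕ) (p : ℝ≥0∞) [Fact (1 ≤ p)] (n : ℕ) (a b : ℝ) (X : Conf d n → ℕ) :
    ℕ → ℝ :=
  fun m => prob d ρ p n a b {σ | X σ = m}

/-- The distribution on `ℕ` of a real-valued (integer-valued in fact) observable. -/
def lawR (d ρ : ℕ) (p : ℝ≥0∞) [Fact (1 ≤ p)] (n : ℕ) (a b : ℝ) (X : Conf d n → ℝ) :
    ℕ → ℝ :=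
  fun m => prob d ρ p n a b {σ | X σ = (m : ℝ)}

/-- The Poisson distribution with parameter `θ`, as a pmf on `ℕ`. -/
def poissonPMF (θ : ℝ) : ℕ → ℝ :=
  fun m => Real.exp (-θ) * θ ^ m / (Nat.factorial m : ℝ)

/-- Total variation distance between two distributions on `ℕ`:
`d_TV(μ,ν) = sup_A |μ(A) - ν(A)|`. -/
def dTV (f g : ℕ → ℝ) : ℝ :=
  ⨆ A : Set ℕ, |(∑' m : ↥A, f (m : ℕ)) - ∑' m : ↥A, g (m : ℕ)|

/-- The clean extension `η̊ ∈ D_{r+1}` of `η ∈ D_r`: it agrees with `η` on `B(0,r)` and is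
negative at every vertex at distance exactly `r+1` from `0`. -/
def ringExt (d ρ : ℕ) (p : ℝ≥0∞) [Fact (1 ≤ p)] (r : ℕ) (η : LocalConfig d ρ p r) :
    LocalConfig d ρ p (r + 1) := by
  classical exact fun v => if h : v.1 ∈ refBall d ρ p r then η ⟨v.1, h⟩ else false

/-- `D_r(η) = {η' ∈ D_r : V_+(η') ⊇ V_+(η)}`. -/
def Dfam (d ρ : ℕ) (p : ℝ≥0∞) [Fact (1 ≤ p)] (r : ℕ) (η : LocalConfig d ρ p r) :
    Set (LocalConfig d ρ p r) :=
  {η' | ∀ v, η v = true → η' v = true}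

/-- `Ī_x^η = Σ_{η' ∈ D_r(η)} I_x^{η'}`. -/
def barInd (d ρ : ℕ) (p : ℝ≥0∞) [Fact (1 ≤ p)] (r n : ℕ) (η : LocalConfig d ρ p r)
    (x : Vtx d n) (σ : Conf d n) : ℝ :=
  ∑' η' : ↥(Dfam d ρ p r η), occInd d ρ p r n (η' : LocalConfig d ρ p r) x σ

/-- `X̄_n(η) = Σ_x Ī_x^η`. -/
def Xbar (d ρ : ℕ) (p : ℝ≥0∞) [Fact (1 ≤ p)] (r n : ℕ) (η : LocalConfig d ρ p r)
    (σ : Conf d n) : ℝ :=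
  ∑' x : Vtx d n, barInd d ρ p r n η x σ

/-- The closed neighbourhood `B̄ = B ∪ δB` of a torus ball. -/
def cball (d ρ : ℕ) (p : ℝ≥0∞) [Fact (1 ≤ p)] (n : ℕ) (x : Vtx d n) (r : ℕ) :
    Set (Vtx d n) :=
  tball d ρ p n x r ∪ boundary d ρ p n (tball d ρ p n x r)

/-- One step of the connectivity relation between the balls of radius `r` centered at the
entries of a tuple: `B̄(x_i) ∩ B(x_j) ≠ ∅`. -/
def stepRel (d ρ : ℕ) (p : ℝ≥0∞) [Fact (1 ≤ p)] (n r : ℕ) {l : ℕ} (x : Fin l → Vtx d n)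
    (i j : Fin l) : Prop :=
  (cball d ρ p n (x i) r ∩ tball d ρ p n (x j) r).Nonempty

/-- The number of equivalence classes, for the connectivity relation, of the set of balls
`{B(x_1,r), …, B(x_l,r)}`. -/
def numClasses (d ρ : ℕ) (p : ℝ≥0∞) [Fact (1 ≤ p)] (n r : ℕ) {l : ℕ}
    (x : Fin l → Vtx d n) : ℕ :=
  Set.ncard (Set.range fun i : Fin l =>
    {j : Fin l | Relation.EqvGen (stepRel d ρ p n r x) i j})

/-- `C_l(s)`: the set of `l`-tuples of vertices whose set of balls of radius `r` is composed
of exactly `s` equivalence classes for the connectivity relation. -/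
def tupleClass (d ρ : ℕ) (p : ℝ≥0∞) [Fact (1 ≤ p)] (n r l s : ℕ) :
    Set (Fin l → Vtx d n) :=
  {x | numClasses d ρ p n r x = s}


-- coordinate bound from lpNorm
lemma coord_le_lpNorm (p : ℝ≥0∞) [Fact (1 ≤ p)] {d : ℕ} (z : Fin d → ℤ) (i : Fin d) :
    |(z i : ℝ)| ≤ lpNorm p z := by
  set f := (WithLp.equiv p (Fin d → ℝ)).symm (fun i => (z i : ℝ)) with hf
  have hfi : f i = (z i : ℝ) := rfl
  have h : ‖f i‖ ≤ ‖f‖ := by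
    rcases p.dichotomy with hp | hp
    · subst hp
      rw [PiLp.norm_eq_ciSup]
      exact le_ciSup (f := fun j => ‖f j‖) (Set.Finite.bddAbove (Set.finite_range _)) i
    · have hp0 : 0 < p.toReal := lt_of_lt_of_le one_pos hp
      rw [PiLp.norm_eq_sum hp0]
      have h1 : ‖f i‖ = (‖f i‖ ^ p.toReal) ^ (1 / p.toReal) := by
        rw [← Real.rpow_mul (norm_nonneg _), mul_one_div_cancel hp0.ne', Real.rpow_one]
      rw [h1]
      refine Real.rpow_le_rpow (Real.rpow_nonneg (norm_nonneg _) _) ?_ (by positivity)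
      exact Finset.single_le_sum (fun j _ => Real.rpow_nonneg (norm_nonneg _) _)
        (Finset.mem_univ i)
  rw [hfi, Real.norm_eq_abs] at h
  exact h

lemma coord_le_of_lpNorm_le (p : ℝ≥0∞) [Fact (1 ≤ p)] {d ρ : ℕ} {z : Fin d → ℤ}
    (h : lpNorm p z ≤ (ρ : ℝ)) (i : Fin d) : |z i| ≤ (ρ : ℤ) := by
  have := (coord_le_lpNorm p z i).trans h
  exact_mod_cast this

lemma walk_coord_bound (d ρ : ℕ) (p : ℝ≥0∞) [Fact (1 ≤ p)] :
    ∀ {u v : Fin d → ℤ} (w : (latticeZ d ρ p).Walk u v) (i : Fin d),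
      |v i - u i| ≤ (ρ : ℤ) * w.length := by
  intro u v w
  induction w with
  | nil => intro i; simp
  | @cons u u' v h w ih =>
    intro i
    have h1 : |u' i - u i| ≤ (ρ : ℤ) := coord_le_of_lpNorm_le p (show u ≠ u' ∧ lpNorm p (fun i => u' i - u i) ≤ (ρ : ℝ) from h).2 i
    have h2 := ih i
    rw [SimpleGraph.Walk.length_cons]
    have : |v i - u i| ≤ |v i - u' i| + |u' i - u i| := by
      have := abs_sub_abs_le_abs_sub (v i - u i) (v i - u' i)
      calc |v i - u i| = |(v i - u' i) + (u' i - u i)| := by ring_nf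
        _ ≤ |v i - u' i| + |u' i - u i| := abs_add_le _ _
    push_cast
    nlinarith [abs_nonneg (v i - u' i)]

lemma refBall_coord_bound (d ρ : ℕ) (p : ℝ≥0∞) [Fact (1 ≤ p)] (R : ℕ)
    {v : Fin d → ℤ} (hv : v ∈ refBall d ρ p R) (i : Fin d) : |v i| ≤ (ρ : ℤ) * R := by
  obtain ⟨hr, hdist⟩ := hv
  obtain ⟨w, hw⟩ := hr.exists_walk_length_eq_dist
  have h1 := walk_coord_bound d ρ p w i
  simp only [Pi.zero_apply, sub_zero] at h1
  have h2 : (w.length : ℤ) ≤ (R : ℤ) := by rw [hw]; exact_mod_cast hdist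
  nlinarith [abs_nonneg (v i)]

lemma refBall_finite (d ρ : ℕ) (p : ℝ≥0∞) [Fact (1 ≤ p)] (R : ℕ) :
    (refBall d ρ p R).Finite := by
  refine Set.Finite.subset (Set.Finite.pi' (t := fun _ : Fin d => Set.Icc (-(ρ * R) : ℤ) (ρ * R))
    (fun i => Set.finite_Icc _ _)) ?_
  intro v hv
  intro i
  have := refBall_coord_bound d ρ p R hv i
  rw [abs_le] at this
  exact ⟨this.1, this.2⟩

lemma cast_inj_of_bound {n : ℕ} {M : ℤ} (hn : 2 * M < (n : ℤ))
    {x y : ℤ} (hx : |x| ≤ M) (hy : |y| ≤ M) (h : ((x : ZMod n) = (y : ZMod n))) : x = y := by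
  have hd : (n : ℤ) ∣ y - x := by
    rw [ZMod.intCast_eq_intCast_iff] at h
    exact h.dvd
  have habs : |y - x| < (n : ℤ) := by
    calc |y - x| ≤ |y| + |x| := abs_sub _ _
      _ ≤ 2 * M := by linarith
      _ < n := hn
  have := Int.eq_zero_of_abs_lt_dvd hd habs
  linarith


/-- **Lemma (expectation bound).**  If `e^{2a(n)} = c n^{-d/k(η)}`, `R ≥ r` and `ζ ∈ D_R`,
then there is `M₁ > 0` such that `E_{a(n),b}[X_n(ζ)] ≤ M₁ e^{2a(n)(k(ζ) - k(η))}` for all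
admissible `n`. -/
theorem stmt_3
    (d ρ r R : ℕ) (hd : 1 ≤ d) (hρ : 1 ≤ ρ) (hrR : r ≤ R) (p : ℝ≥0∞) [Fact (1 ≤ p)]
    (η : LocalConfig d ρ p r) (hk : 1 ≤ kOf d ρ p r η)
    (ζ : LocalConfig d ρ p R)
    (c : ℝ) (hc : 0 < c) (b : ℝ) (a : ℕ → ℝ)
    (ha : ∀ n : ℕ, 0 < n →
      Real.exp (2 * a n) = c * (n : ℝ) ^ (-(d : ℝ) / (kOf d ρ p r η : ℝ))) :
    ∃ M₁ : ℝ, 0 < M₁ ∧ ∀ n : ℕ, 2 * ρ * (R + 1) < n →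
      expect d ρ p n (a n) b (fun σ => (Xcount d ρ p R n ζ σ : ℝ))
        ≤ M₁ * Real.exp (2 * a n * ((kOf d ρ p R ζ : ℝ) - (kOf d ρ p r η : ℝ))) := by
  classical
  set kη := kOf d ρ p r η with hkηdef
  set kζ := kOf d ρ p R ζ with hkζdef
  set Bfin : Finset (Fin d → ℤ) :=
    Fintype.piFinset (fun _ : Fin d => Finset.Icc (-(ρ : ℤ)) (ρ : ℤ)) with hBfindef
  set K : ℝ := ((kζ * Bfin.card : ℕ) : ℝ) with hKdef
  have hK0 : 0 ≤ K := by rw [hKdef]; positivity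
  refine ⟨c ^ kη * Real.exp (2 * |b| * K), by positivity, ?_⟩
  intro n hn
  have hn0 : 0 < n := lt_of_le_of_lt (Nat.zero_le _) hn
  haveI : NeZero n := ⟨hn0.ne'⟩
  set A := a n with hAdef
  -- injectivity of the coordinate cast on the reference ball
  have hcastinj : ∀ v w : ↥(refBall d ρ p R),
      (fun i => ((v.1 i : ZMod n))) = (fun i => ((w.1 i : ZMod n))) → v = w := by
    intro v w h
    have hM : 2 * ((ρ : ℤ) * R) < (n : ℤ) := by
      have h2 : ((2 * ρ * (R + 1) : ℕ) : ℤ) < (n : ℤ) := by exact_mod_cast hn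
      have hρ' : (1 : ℤ) ≤ (ρ : ℤ) := by exact_mod_cast hρ
      push_cast at h2
      nlinarith
    apply Subtype.ext
    funext i
    exact cast_inj_of_bound hM (refBall_coord_bound d ρ p R v.2 i)
      (refBall_coord_bound d ρ p R w.2 i) (congrFun h i)
  set W : Conf d n → ℝ := weight d ρ p n A b with hWdef
  have hWpos : ∀ σ, 0 < W σ := fun σ => Real.exp_pos _
  have hZ : partZ d ρ p n A b = ∑ σ : Conf d n, W σ := by
    rw [partZ, tsum_fintype]
  have hZpos : 0 < partZ d ρ p n A b := by
    rw [hZ]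
    exact Finset.sum_pos (fun σ _ => hWpos σ) ⟨fun _ => true, Finset.mem_univ _⟩
  set β : ℝ := 2 * A * kζ + 2 * |b| * K with hβdef
  -- key per-center bound
  have key : ∀ x : Vtx d n,
      ∑ σ ∈ Finset.univ.filter (fun σ => occursAt d ρ p R n ζ x σ), W σ
        ≤ Real.exp β * partZ d ρ p n A b := by
    intro x
    set φ : ↥(refBall d ρ p R) → Vtx d n :=
      fun v => x + fun i => ((v.1 i : ZMod n)) with hφdef
    have hφinj : Function.Injective φ := by
      intro v w h
      apply hcastinj
      have := add_left_cancel h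
      exact this
    set S : Set (Vtx d n) := φ '' {v | ζ v = true} with hSdef
    have hSfin : S.Finite := Set.toFinite _
    have hScard : hSfin.toFinset.card = kζ := by
      rw [← Set.ncard_eq_toFinset_card _ hSfin, hSdef,
        Set.ncard_image_of_injective _ hφinj, hkζdef]
      rfl
    set T : Conf d n → Conf d n := fun σ y => if y ∈ S then false else σ y with hTdef
    set E := Finset.univ.filter (fun σ => occursAt d ρ p R n ζ x σ) with hEdef
    have hmemS : ∀ σ ∈ E, ∀ y ∈ S, σ y = true := by
      intro σ hσ y hy
      obtain ⟨v, hv, rfl⟩ := hy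
      have hocc : occursAt d ρ p R n ζ x σ := by
        rw [hEdef] at hσ; exact (Finset.mem_filter.mp hσ).2
      have h1 := hocc v
      rw [hφdef]
      exact h1.trans hv
    have hTS : ∀ σ, ∀ y ∈ S, T σ y = false := by
      intro σ y hy; rw [hTdef]; simp [hy]
    have hTnS : ∀ σ, ∀ y, y ∉ S → T σ y = σ y := by
      intro σ y hy; rw [hTdef]; simp [hy]
    have huniv_filter : Finset.univ.filter (fun y : Vtx d n => y ∈ S) = hSfin.toFinset := by
      ext y
      simp only [Finset.mem_filter, Finset.mem_univ, true_and, Set.Finite.mem_toFinset]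
    -- spin sum identity
    have hspin : ∀ σ ∈ E,
        ∑ y : Vtx d n, spin (σ y) = (∑ y : Vtx d n, spin (T σ y)) + 2 * kζ := by
      intro σ hσ
      have h1 : ∀ y : Vtx d n, spin (σ y) - spin (T σ y) = if y ∈ S then 2 else 0 := by
        intro y
        by_cases hy : y ∈ S
        · rw [if_pos hy, hmemS σ hσ y hy, hTS σ y hy]; norm_num [spin]
        · rw [if_neg hy, hTnS σ y hy, sub_self]
      have h2 : ∑ y : Vtx d n, (spin (σ y) - spin (T σ y)) = 2 * kζ := by
        rw [Finset.sum_congr rfl (fun y _ => h1 y), ← Finset.sum_filter,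
          huniv_filter, Finset.sum_const, hScard, nsmul_eq_mul]
        ring
      rw [Finset.sum_sub_distrib] at h2
      linarith
    -- pair sum bound
    haveI hEdgeF : Fintype ↥(torus d ρ p n).edgeSet := (Set.toFinite _).fintype
    have hpair : ∀ σ : Conf d n,
        |pairSum d ρ p n σ - pairSum d ρ p n (T σ)| ≤ 2 * K := by
      intro σ
      set L : Conf d n → Sym2 (Vtx d n) → ℝ := fun τ e =>
        Sym2.lift ⟨fun u v => spin (τ u) * spin (τ v), fun _ _ => mul_comm _ _⟩ e with hLdef
      have hps : ∀ τ, pairSum d ρ p n τ = ∑ e : ↥(torus d ρ p n).edgeSet, L τ e.1 := by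
        intro τ; rw [pairSum, tsum_fintype]
      have hterm : ∀ e : Sym2 (Vtx d n),
          |L σ e - L (T σ) e| ≤ if ∃ y ∈ S, y ∈ e then (2 : ℝ) else 0 := by
        intro e
        induction e using Sym2.ind with
        | _ u v =>
          by_cases htouch : ∃ y ∈ S, y ∈ s(u, v)
          · rw [if_pos htouch]
            have hb : ∀ s t : Bool, |spin s * spin t| ≤ 1 := by
              intro s t; cases s <;> cases t <;> norm_num [spin]
            calc |L σ s(u, v) - L (T σ) s(u, v)|
                ≤ |L σ s(u, v)| + |L (T σ) s(u, v)| := abs_sub _ _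
              _ ≤ 1 + 1 := by
                  rw [hLdef]; simp only [Sym2.lift_mk]
                  exact add_le_add (hb _ _) (hb _ _)
              _ = 2 := by norm_num
          · rw [if_neg htouch]
            push_neg at htouch
            have hu : u ∉ S := fun h => htouch u h (by simp)
            have hv : v ∉ S := fun h => htouch v h (by simp)
            rw [hLdef]
            simp only [Sym2.lift_mk, hTnS σ u hu, hTnS σ v hv, sub_self, abs_zero]
            exact le_refl 0
      -- counting touching edges
      have hrep : ∀ e : ↥(torus d ρ p n).edgeSet, (∃ y ∈ S, y ∈ e.1) →
          ∃ q : Vtx d n × (Fin d → ℤ), q.1 ∈ S ∧ q.2 ∈ Bfin ∧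
            e.1 = s(q.1, q.1 + fun i => ((q.2 i : ZMod n))) := by
        rintro e ⟨y, hyS, hye⟩
        have hadj : (torus d ρ p n).Adj y (Sym2.Mem.other hye) := by
          rw [← SimpleGraph.mem_edgeSet, Sym2.other_spec hye]
          exact e.2
        obtain ⟨hne, z, hz, hzn⟩ := (show y ≠ Sym2.Mem.other hye ∧ ∃ z : Fin d → ℤ,
          (∀ i, ((z i : ZMod n) = Sym2.Mem.other hye i - y i)) ∧ lpNorm p z ≤ (ρ : ℝ) from hadj)
        refine ⟨(y, z), hyS, ?_, ?_⟩
        · rw [hBfindef, Fintype.mem_piFinset]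
          intro i
          rw [Finset.mem_Icc, ← abs_le]
          exact coord_le_of_lpNorm_le p hzn i
        · show e.1 = s(y, y + fun i => ((z i : ZMod n)))
          have hoth : Sym2.Mem.other hye = y + fun i => ((z i : ZMod n)) := by
            funext i
            rw [Pi.add_apply, hz i]
            exact (add_sub_cancel _ _).symm
          rw [← Sym2.other_spec hye, hoth]
      set f : ↥(torus d ρ p n).edgeSet → Vtx d n × (Fin d → ℤ) := fun e =>
        if h : ∃ y ∈ S, y ∈ e.1 then (hrep e h).choose else (x, 0) with hfdef
      have hfspec : ∀ e, ∀ h : (∃ y ∈ S, y ∈ e.1), (f e).1 ∈ S ∧ (f e).2 ∈ Bfin ∧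
          e.1 = s((f e).1, (f e).1 + fun i => (((f e).2 i : ZMod n))) := by
        intro e h
        rw [hfdef]
        simp only [dif_pos h]
        exact (hrep e h).choose_spec
      have hcount : (Finset.univ.filter
          (fun e : ↥(torus d ρ p n).edgeSet => ∃ y ∈ S, y ∈ e.1)).card
            ≤ kζ * Bfin.card := by
        have hmaps : ∀ e ∈ Finset.univ.filter
            (fun e : ↥(torus d ρ p n).edgeSet => ∃ y ∈ S, y ∈ e.1),
            f e ∈ hSfin.toFinset ×ˢ Bfin := by
          intro e he
          have h := (Finset.mem_filter.mp he).2
          obtain ⟨h1, h2, _⟩ := hfspec e h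
          rw [Finset.mem_product]
          exact ⟨(Set.Finite.mem_toFinset hSfin).mpr h1, h2⟩
        have hinj : Set.InjOn f (Finset.univ.filter
            (fun e : ↥(torus d ρ p n).edgeSet => ∃ y ∈ S, y ∈ e.1) : Set _) := by
          intro e he e' he' hfe
          rw [Finset.mem_coe, Finset.mem_filter] at he he'
          obtain ⟨_, _, h3⟩ := hfspec e he.2
          obtain ⟨_, _, h3'⟩ := hfspec e' he'.2
          apply Subtype.ext
          rw [h3, h3', hfe]
        have hle := Finset.card_le_card_of_injOn f hmaps hinj
        rw [Finset.card_product, hScard] at hle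
        exact hle
      calc |pairSum d ρ p n σ - pairSum d ρ p n (T σ)|
          = |∑ e : ↥(torus d ρ p n).edgeSet, (L σ e.1 - L (T σ) e.1)| := by
            rw [hps, hps, Finset.sum_sub_distrib]
        _ ≤ ∑ e : ↥(torus d ρ p n).edgeSet, |L σ e.1 - L (T σ) e.1| :=
            Finset.abs_sum_le_sum_abs _ _
        _ ≤ ∑ e : ↥(torus d ρ p n).edgeSet,
              if ∃ y ∈ S, y ∈ e.1 then (2 : ℝ) else 0 :=
            Finset.sum_le_sum (fun e _ => hterm e.1)
        _ = 2 * ((Finset.univ.filter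
              (fun e : ↥(torus d ρ p n).edgeSet => ∃ y ∈ S, y ∈ e.1)).card : ℝ) := by
            rw [← Finset.sum_filter, Finset.sum_const, nsmul_eq_mul]; ring
        _ ≤ 2 * K := by
            rw [hKdef]
            have : ((Finset.univ.filter
                (fun e : ↥(torus d ρ p n).edgeSet => ∃ y ∈ S, y ∈ e.1)).card : ℝ)
                  ≤ ((kζ * Bfin.card : ℕ) : ℝ) := by exact_mod_cast hcount
            linarith
    -- weight comparison
    have hwt : ∀ σ ∈ E, W σ ≤ Real.exp β * W (T σ) := by
      intro σ hσ
      have hham : hamiltonian d ρ p n A b σ ≤ hamiltonian d ρ p n A b (T σ) + β := by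
        rw [hamiltonian, hamiltonian, tsum_fintype, tsum_fintype, hspin σ hσ]
        have h2 := hpair σ
        have hb2 : b * (pairSum d ρ p n σ - pairSum d ρ p n (T σ)) ≤ |b| * (2 * K) := by
          calc b * (pairSum d ρ p n σ - pairSum d ρ p n (T σ))
              ≤ |b * (pairSum d ρ p n σ - pairSum d ρ p n (T σ))| := le_abs_self _
            _ = |b| * |pairSum d ρ p n σ - pairSum d ρ p n (T σ)| := abs_mul _ _
            _ ≤ |b| * (2 * K) := mul_le_mul_of_nonneg_left h2 (abs_nonneg b)
        rw [hβdef]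
        nlinarith [hb2]
      calc W σ = Real.exp (hamiltonian d ρ p n A b σ) := rfl
        _ ≤ Real.exp (hamiltonian d ρ p n A b (T σ) + β) := Real.exp_le_exp.mpr hham
        _ = Real.exp β * W (T σ) := by rw [Real.exp_add, mul_comm]; rfl
    -- injectivity of T on the event
    have hTinj : ∀ σ ∈ E, ∀ σ' ∈ E, T σ = T σ' → σ = σ' := by
      intro σ hσ σ' hσ' h
      funext y
      by_cases hy : y ∈ S
      · rw [hmemS σ hσ y hy, hmemS σ' hσ' y hy]
      · rw [← hTnS σ y hy, ← hTnS σ' y hy, h]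
    calc ∑ σ ∈ E, W σ ≤ ∑ σ ∈ E, Real.exp β * W (T σ) := Finset.sum_le_sum hwt
      _ = Real.exp β * ∑ σ ∈ E, W (T σ) := by rw [Finset.mul_sum]
      _ = Real.exp β * ∑ τ ∈ E.image T, W τ := by rw [Finset.sum_image hTinj]
      _ ≤ Real.exp β * ∑ τ : Conf d n, W τ :=
          mul_le_mul_of_nonneg_left
            (Finset.sum_le_sum_of_subset_of_nonneg (Finset.subset_univ _)
              (fun τ _ _ => (hWpos τ).le))
            (Real.exp_nonneg β)
      _ = Real.exp β * partZ d ρ p n A b := by rw [hZ]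
  -- the expectation bound
  have hXc : ∀ σ : Conf d n, ((Xcount d ρ p R n ζ σ : ℕ) : ℝ)
      = ∑ x : Vtx d n, if occursAt d ρ p R n ζ x σ then (1 : ℝ) else 0 := by
    intro σ
    have hfin : {x : Vtx d n | occursAt d ρ p R n ζ x σ}.Finite := Set.toFinite _
    rw [Xcount, Set.ncard_eq_toFinset_card _ hfin]
    have heq : hfin.toFinset = Finset.univ.filter (fun x => occursAt d ρ p R n ζ x σ) := by
      ext y; simp [Set.Finite.mem_toFinset]
    rw [heq, Finset.card_filter]
    push_cast
    rfl
  have hcard : (Fintype.card (Vtx d n) : ℝ) = (n : ℝ) ^ d := by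
    rw [show Fintype.card (Vtx d n) = Fintype.card (ZMod n) ^ Fintype.card (Fin d) from
      Fintype.card_fun, ZMod.card, Fintype.card_fin]
    push_cast
    ring
  have hnum : ∑ σ : Conf d n, W σ * ((Xcount d ρ p R n ζ σ : ℕ) : ℝ)
      ≤ (n : ℝ) ^ d * (Real.exp β * partZ d ρ p n A b) := by
    calc ∑ σ : Conf d n, W σ * ((Xcount d ρ p R n ζ σ : ℕ) : ℝ)
        = ∑ σ : Conf d n, ∑ x : Vtx d n,
            W σ * (if occursAt d ρ p R n ζ x σ then (1 : ℝ) else 0) := by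
          refine Finset.sum_congr rfl fun σ _ => ?_
          rw [hXc σ, Finset.mul_sum]
      _ = ∑ x : Vtx d n, ∑ σ : Conf d n,
            W σ * (if occursAt d ρ p R n ζ x σ then (1 : ℝ) else 0) := Finset.sum_comm
      _ = ∑ x : Vtx d n,
            ∑ σ ∈ Finset.univ.filter (fun σ => occursAt d ρ p R n ζ x σ), W σ := by
          refine Finset.sum_congr rfl fun x _ => ?_
          rw [Finset.sum_filter]
          refine Finset.sum_congr rfl fun σ _ => ?_
          by_cases h : occursAt d ρ p R n ζ x σ <;> simp [h]
      _ ≤ ∑ _x : Vtx d n, Real.exp β * partZ d ρ p n A b :=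
          Finset.sum_le_sum (fun x _ => key x)
      _ = (Fintype.card (Vtx d n) : ℝ) * (Real.exp β * partZ d ρ p n A b) := by
          rw [Finset.sum_const, nsmul_eq_mul, Finset.card_univ]
      _ = (n : ℝ) ^ d * (Real.exp β * partZ d ρ p n A b) := by rw [hcard]
  have hexp : expect d ρ p n A b (fun σ => ((Xcount d ρ p R n ζ σ : ℕ) : ℝ))
      ≤ (n : ℝ) ^ d * Real.exp β := by
    rw [expect, tsum_fintype, div_le_iff₀ hZpos]
    calc ∑ σ : Conf d n, weight d ρ p n A b σ * ((Xcount d ρ p R n ζ σ : ℕ) : ℝ)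
        ≤ (n : ℝ) ^ d * (Real.exp β * partZ d ρ p n A b) := hnum
      _ = (n : ℝ) ^ d * Real.exp β * partZ d ρ p n A b := by ring
  refine hexp.trans ?_
  -- final algebra
  have hkη1 : (1 : ℝ) ≤ (kη : ℝ) := by exact_mod_cast hk
  have hkη0 : (kη : ℝ) ≠ 0 := by linarith
  have hndpos : (0 : ℝ) < (n : ℝ) ^ d := by positivity
  have hnd : ((n : ℝ)) ^ d = c ^ kη * (Real.exp (2 * A * kη))⁻¹ := by
    have h0 := ha n hn0
    have h1 : Real.exp (2 * A * kη) = Real.exp (2 * A) ^ kη := by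
      rw [show 2 * A * (kη : ℝ) = (kη : ℝ) * (2 * A) by ring, Real.exp_nat_mul]
    have h2 : ((n : ℝ) ^ (-(d : ℝ) / (kη : ℝ))) ^ kη = ((n : ℝ) ^ d)⁻¹ := by
      rw [← Real.rpow_natCast ((n : ℝ) ^ (-(d : ℝ) / (kη : ℝ))) kη,
        ← Real.rpow_mul (Nat.cast_nonneg n), div_mul_cancel₀ _ hkη0,
        Real.rpow_neg (Nat.cast_nonneg n), Real.rpow_natCast]
    rw [h1, h0, mul_pow, h2] at *
    field_simp
  have heq : (n : ℝ) ^ d * Real.exp β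
      = c ^ kη * Real.exp (2 * |b| * K) * Real.exp (2 * A * ((kζ : ℝ) - (kη : ℝ))) := by
    rw [hnd, hβdef, Real.exp_add,
      show 2 * A * ((kζ : ℝ) - (kη : ℝ)) = 2 * A * kζ - 2 * A * kη by ring,
      Real.exp_sub, div_eq_mul_inv]
    ring
  exact le_of_eq heq


end

end Ising
end

section
/- Let η ∈ D_r be a clean local configuration with k(η) ≥ 1 and suppose e^{2a(n)} = c n^{−d/k(η)} for a fixed constant c > 0, with b a fixed real. Then there exists a constant M_2 > 0 such that for all admissible n, c^{k(η)} e^{−2bγ(η)} (1 − M_2 e^{2a(n)}) ≤ E_{a(n),b}[X_n(η)] ≤ c^{k(η)} e^{−2bγ(η)}. -/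
open scoped ENNReal BigOperators
open Filter

namespace Ising

noncomputable section

section Aux

variable (d ρ : ℕ) (p : ℝ≥0∞) [Fact (1 ≤ p)] (r : ℕ)

lemma abs_le_lpNorm (z : Fin d → ℤ) (i : Fin d) :
    |(z i : ℝ)| ≤ lpNorm p z := by
  unfold lpNorm
  set f := (WithLp.equiv p (Fin d → ℝ)).symm (fun i => (z i : ℝ)) with hf
  have hfi : f i = (z i : ℝ) := rfl
  rcases p.dichotomy with hp | hp
  · subst hp
    rw [PiLp.norm_eq_ciSup]
    calc |(z i : ℝ)| = ‖f i‖ := by rw [hfi, Real.norm_eq_abs]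
    _ ≤ ⨆ j, ‖f j‖ :=
      le_ciSup (f := fun j => ‖f j‖) (Set.Finite.bddAbove (Set.finite_range _)) i
  · have hp0 : 0 < p.toReal := lt_of_lt_of_le one_pos hp
    rw [PiLp.norm_eq_sum hp0]
    have h1 : |(z i : ℝ)| = (‖f i‖ ^ p.toReal) ^ (1 / p.toReal) := by
      rw [← Real.rpow_mul (norm_nonneg (f i)), mul_one_div, div_self hp0.ne',
        Real.rpow_one, hfi, Real.norm_eq_abs]
    rw [h1]
    apply Real.rpow_le_rpow (by positivity) _ (by positivity)
    exact Finset.single_le_sum (f := fun j => ‖f j‖ ^ p.toReal)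
      (fun j _ => by positivity) (Finset.mem_univ i)

lemma aux_adj_coord {v w : Fin d → ℤ} (h : (latticeZ d ρ p).Adj v w) (i : Fin d) :
    |w i - v i| ≤ (ρ : ℤ) := by
  have h1 := abs_le_lpNorm d p (fun i => w i - v i) i
  have h2 := h.2
  have : |((w i - v i : ℤ) : ℝ)| ≤ (ρ : ℝ) := by
    push_cast at h1 ⊢
    exact h1.trans h2
  exact_mod_cast this

lemma aux_adj_translate (t : Fin d → ℤ) {v w : Fin d → ℤ} :
    (latticeZ d ρ p).Adj (v + t) (w + t) ↔ (latticeZ d ρ p).Adj v w := by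
  have hnorm : (fun i => (w + t) i - (v + t) i) = fun i => w i - v i := by
    funext i; simp only [Pi.add_apply]; ring
  constructor
  · rintro ⟨hne, hn⟩
    exact ⟨fun h => hne (by rw [h]), by rw [← hnorm]; exact hn⟩
  · rintro ⟨hne, hn⟩
    exact ⟨fun h => hne (by simpa using add_right_cancel h), by rw [hnorm]; exact hn⟩

lemma aux_walk_coord {v w : Fin d → ℤ} (q : (latticeZ d ρ p).Walk v w) (i : Fin d) :
    |w i - v i| ≤ (ρ : ℤ) * q.length := by
  induction q with
  | nil => simp
  | cons h q ih =>
    rename_i a b c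
    calc |c i - a i| ≤ |b i - a i| + |c i - b i| := by
          have : c i - a i = (b i - a i) + (c i - b i) := by ring
          rw [this]; exact abs_add_le _ _
    _ ≤ (ρ : ℤ) + (ρ : ℤ) * q.length := add_le_add (aux_adj_coord d ρ p h i) ih
    _ = (ρ : ℤ) * (q.cons h).length := by
          rw [SimpleGraph.Walk.length_cons]; push_cast; ring

lemma aux_mem_refBall_coord {v : Fin d → ℤ} (hv : v ∈ refBall d ρ p r) (i : Fin d) :
    |v i| ≤ (ρ : ℤ) * r := by
  obtain ⟨hreach, hdist⟩ := hv
  obtain ⟨q, hq⟩ := hreach.exists_walk_length_eq_dist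
  calc |v i| = |v i - (0 : Fin d → ℤ) i| := by simp
  _ ≤ (ρ : ℤ) * q.length := aux_walk_coord d ρ p q i
  _ ≤ (ρ : ℤ) * r := by
      rw [hq]
      exact mul_le_mul_of_nonneg_left (by exact_mod_cast hdist) (by positivity)

lemma aux_refBall_finite : (refBall d ρ p r).Finite := by
  apply Set.Finite.subset
    (Set.Finite.pi (fun i : Fin d => Set.finite_Icc (-(ρ : ℤ) * r) ((ρ : ℤ) * r)))
  intro v hv
  simp only [Set.mem_pi, Set.mem_univ, Set.mem_Icc, forall_true_left]
  intro i
  have := aux_mem_refBall_coord d ρ p r hv i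
  rw [abs_le] at this
  exact ⟨by linarith [this.1], this.2⟩

lemma aux_zero_mem_refBall : (0 : Fin d → ℤ) ∈ refBall d ρ p r :=
  ⟨SimpleGraph.Reachable.refl 0, by rw [SimpleGraph.dist_self]; exact Nat.zero_le r⟩

lemma aux_nbr_finite (v : Fin d → ℤ) : {w | (latticeZ d ρ p).Adj v w}.Finite := by
  apply Set.Finite.subset
    (Set.Finite.pi (fun i : Fin d => Set.finite_Icc (v i - ρ) (v i + ρ)))
  intro w hw
  simp only [Set.mem_pi, Set.mem_univ, Set.mem_Icc, forall_true_left]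
  intro i
  have := aux_adj_coord d ρ p hw i
  rw [abs_le] at this
  constructor <;> linarith [this.1, this.2]

lemma aux_ncard_nbr (v : Fin d → ℤ) :
    {w | (latticeZ d ρ p).Adj v w}.ncard = degZ d ρ p := by
  have himg : {w | (latticeZ d ρ p).Adj v w}
      = (fun z => z + v) '' {z | (latticeZ d ρ p).Adj 0 z} := by
    ext w
    simp only [Set.mem_setOf_eq, Set.mem_image]
    constructor
    · intro h
      refine ⟨w - v, ?_, by abel⟩
      have h2 : (latticeZ d ρ p).Adj (0 + v) (w - v + v) := by
        rw [zero_add, sub_add_cancel]; exact h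
      exact (aux_adj_translate d ρ p v).mp h2
    · rintro ⟨z, hz, rfl⟩
      have := (aux_adj_translate d ρ p v).mpr hz
      simpa using this
  rw [himg, Set.ncard_image_of_injective _ (add_left_injective v)]
  rfl

lemma aux_pos_dist {η : LocalConfig d ρ p r} (hclean : Clean d ρ p r η)
    {v : ↥(refBall d ρ p r)} (hv : η v = true) :
    (latticeZ d ρ p).dist 0 v.1 + 1 ≤ r := by
  have h1 : (latticeZ d ρ p).dist 0 v.1 ≤ r := v.2.2
  have h2 : (latticeZ d ρ p).dist 0 v.1 ≠ r := by
    intro h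
    rw [hclean v h] at hv
    exact Bool.false_ne_true hv
  omega

lemma aux_pos_nbr_mem {η : LocalConfig d ρ p r} (hclean : Clean d ρ p r η)
    {v : ↥(refBall d ρ p r)} (hv : η v = true) {w : Fin d → ℤ}
    (hw : (latticeZ d ρ p).Adj v.1 w) : w ∈ refBall d ρ p r := by
  obtain ⟨q, hq⟩ := v.2.1.exists_walk_length_eq_dist
  refine ⟨v.2.1.trans hw.reachable, ?_⟩
  calc (latticeZ d ρ p).dist 0 w ≤ (q.concat hw).length := SimpleGraph.dist_le _
  _ = q.length + 1 := SimpleGraph.Walk.length_concat q hw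
  _ ≤ r := by rw [hq]; exact aux_pos_dist d ρ p r hclean hv

end Aux


section Aux2

variable (d ρ : ℕ) (p : ℝ≥0∞) [Fact (1 ≤ p)] (r n : ℕ)

/-- The embedding of integer vectors into the torus, relative to a base point `x`. -/
def embx (x : Vtx d n) (v : Fin d → ℤ) : Vtx d n :=
  x + fun i => ((v i : ZMod n))

lemma aux_cast_inj (hn : 2 * ρ * (r + 1) < n) {a b : ℤ}
    (hab : |a - b| ≤ 2 * (ρ : ℤ) * (r + 1)) (h : (a : ZMod n) = (b : ZMod n)) : a = b := by
  have hdvd : (n : ℤ) ∣ b - a := (ZMod.intCast_eq_intCast_iff _ _ _).mp h |>.dvd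
  have hlt : |b - a| < (n : ℤ) := by
    rw [abs_sub_comm] at hab
    calc |b - a| ≤ 2 * (ρ : ℤ) * (r + 1) := hab
    _ < n := by exact_mod_cast hn
  have := Int.eq_zero_of_abs_lt_dvd hdvd hlt
  linarith

lemma aux_embx_inj (hn : 2 * ρ * (r + 1) < n) (x : Vtx d n) {v w : Fin d → ℤ}
    (hv : ∀ i, |v i| ≤ (ρ : ℤ) * (r + 1)) (hw : ∀ i, |w i| ≤ (ρ : ℤ) * (r + 1))
    (h : embx d n x v = embx d n x w) : v = w := by
  funext i
  have h1 : ((v i : ZMod n)) = ((w i : ZMod n)) := by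
    have := congrFun h i
    simpa [embx] using this
  refine aux_cast_inj ρ r n hn ?_ h1
  calc |v i - w i| ≤ |v i| + |w i| := abs_sub _ _
  _ ≤ (ρ : ℤ) * (r + 1) + (ρ : ℤ) * (r + 1) := add_le_add (hv i) (hw i)
  _ = 2 * (ρ : ℤ) * (r + 1) := by ring

lemma aux_embx_eq (x : Vtx d n) (v z : Fin d → ℤ) :
    embx d n x (v + z) = embx d n x v + fun i => ((z i : ZMod n)) := by
  funext i
  simp only [embx, Pi.add_apply]
  push_cast
  ring

lemma aux_adj_iff (hn : 2 * ρ * (r + 1) < n) (x : Vtx d n) {v w : Fin d → ℤ}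
    (hv : ∀ i, |v i| ≤ (ρ : ℤ) * r) (hw : ∀ i, |w i| ≤ (ρ : ℤ) * r) :
    (torus d ρ p n).Adj (embx d n x v) (embx d n x w) ↔ (latticeZ d ρ p).Adj v w := by
  have hv' : ∀ i, |v i| ≤ (ρ : ℤ) * (r + 1) := fun i =>
    (hv i).trans (by nlinarith [Int.ofNat_nonneg ρ])
  have hw' : ∀ i, |w i| ≤ (ρ : ℤ) * (r + 1) := fun i =>
    (hw i).trans (by nlinarith [Int.ofNat_nonneg ρ])
  constructor
  · rintro ⟨hne, z, hz, hnorm⟩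
    have hzco : ∀ i, |z i| ≤ (ρ : ℤ) := by
      intro i
      have h1 := abs_le_lpNorm d p z i
      have : |((z i : ℤ) : ℝ)| ≤ (ρ : ℝ) := by push_cast at h1 ⊢; exact h1.trans hnorm
      exact_mod_cast this
    have hzeq : z = fun i => w i - v i := by
      funext i
      refine aux_cast_inj ρ r n hn ?_ ?_
      · calc |z i - (w i - v i)| ≤ |z i| + |w i - v i| := abs_sub _ _
        _ ≤ (ρ : ℤ) + (|w i| + |v i|) := add_le_add (hzco i) ((abs_sub _ _))
        _ ≤ (ρ : ℤ) + ((ρ : ℤ) * r + (ρ : ℤ) * r) := by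
            have := hv i; have := hw i; linarith
        _ ≤ 2 * (ρ : ℤ) * (r + 1) := by push_cast; nlinarith [Int.ofNat_nonneg ρ]
      · rw [hz i]
        simp only [embx, Pi.add_apply]
        push_cast
        ring
    refine ⟨fun hvw => hne (by rw [hvw]), ?_⟩
    rw [hzeq] at hnorm
    exact hnorm
  · rintro ⟨hne, hnorm⟩
    refine ⟨fun he => hne (aux_embx_inj d ρ r n hn x hv' hw' he),
      fun i => w i - v i, fun i => ?_, hnorm⟩
    simp only [embx, Pi.add_apply]
    push_cast
    ring

lemma aux_adj_to (hn : 2 * ρ * (r + 1) < n) {η : LocalConfig d ρ p r}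
    (hclean : Clean d ρ p r η) (x : Vtx d n)
    {v : ↥(refBall d ρ p r)} (hv : η v = true) {y : Vtx d n}
    (h : (torus d ρ p n).Adj (embx d n x v.1) y) :
    ∃ w : Fin d → ℤ, w ∈ refBall d ρ p r ∧ y = embx d n x w ∧
      (latticeZ d ρ p).Adj v.1 w := by
  obtain ⟨hne, z, hz, hnorm⟩ := h
  have hy : y = embx d n x (v.1 + z) := by
    rw [aux_embx_eq]
    funext i
    have := hz i
    simp only [Pi.add_apply]
    rw [this]
    ring
  have hz0 : z ≠ 0 := by
    rintro rfl
    apply hne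
    rw [hy]
    simp only [embx]
    funext i
    simp
  have hadj : (latticeZ d ρ p).Adj v.1 (v.1 + z) := by
    refine ⟨fun hc => hz0 ?_, ?_⟩
    · funext i
      have := congrFun hc i
      simp only [Pi.add_apply] at this
      simpa using this.symm
    · have : (fun i => (v.1 + z) i - v.1 i) = z := by funext i; simp
      rw [this]
      exact hnorm
  exact ⟨v.1 + z, aux_pos_nbr_mem d ρ p r hclean hv hadj, hy, hadj⟩

lemma aux_pos_deg (hn : 2 * ρ * (r + 1) < n) {η : LocalConfig d ρ p r}
    (hclean : Clean d ρ p r η) (x : Vtx d n)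
    {v : ↥(refBall d ρ p r)} (hv : η v = true) :
    {y : Vtx d n | (torus d ρ p n).Adj (embx d n x v.1) y}.ncard = degZ d ρ p := by
  have himg : {y : Vtx d n | (torus d ρ p n).Adj (embx d n x v.1) y}
      = (embx d n x) '' {w | (latticeZ d ρ p).Adj v.1 w} := by
    ext y
    simp only [Set.mem_setOf_eq, Set.mem_image]
    constructor
    · intro h
      obtain ⟨w, hwB, rfl, hadj⟩ := aux_adj_to d ρ p r n hn hclean x hv h
      exact ⟨w, hadj, rfl⟩
    · rintro ⟨w, hadj, rfl⟩
      have hwB := aux_pos_nbr_mem d ρ p r hclean hv hadj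
      exact (aux_adj_iff d ρ p r n hn x
        (fun i => aux_mem_refBall_coord d ρ p r v.2 i)
        (fun i => aux_mem_refBall_coord d ρ p r hwB i)).mpr hadj
  rw [himg]
  rw [Set.ncard_image_of_injOn, aux_ncard_nbr]
  intro w1 h1 w2 h2 he
  refine aux_embx_inj d ρ r n hn x ?_ ?_ he
  · intro i
    have := aux_mem_refBall_coord d ρ p r (aux_pos_nbr_mem d ρ p r hclean hv h1) i
    refine this.trans (by nlinarith [Int.ofNat_nonneg ρ])
  · intro i
    have := aux_mem_refBall_coord d ρ p r (aux_pos_nbr_mem d ρ p r hclean hv h2) i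
    refine this.trans (by nlinarith [Int.ofNat_nonneg ρ])

lemma aux_deg_le (hn : 2 * ρ * (r + 1) < n) [NeZero n] (u : Vtx d n) :
    {y : Vtx d n | (torus d ρ p n).Adj u y}.ncard ≤ degZ d ρ p := by
  classical
  have hρn : 2 * (ρ : ℤ) ≤ 2 * (ρ : ℤ) * (r + 1) := by nlinarith [Int.ofNat_nonneg ρ]
  set f : Vtx d n → (Fin d → ℤ) := fun y =>
    if h : (torus d ρ p n).Adj u y then Classical.choose h.2 else 0 with hf
  have hfspec : ∀ y (h : (torus d ρ p n).Adj u y),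
      (∀ i, ((f y i : ZMod n)) = y i - u i) ∧ lpNorm p (f y) ≤ (ρ : ℝ) := by
    intro y h
    rw [hf]
    simp only [dif_pos h]
    exact Classical.choose_spec h.2
  have hmaps : ∀ y ∈ {y : Vtx d n | (torus d ρ p n).Adj u y},
      f y ∈ {z | (latticeZ d ρ p).Adj 0 z} := by
    intro y hy
    obtain ⟨hc, hnorm⟩ := hfspec y hy
    have hy0 : f y ≠ 0 := by
      rintro h0
      apply hy.1
      funext i
      have := hc i
      rw [h0] at this
      simp only [Pi.zero_apply, Int.cast_zero] at this
      have := sub_eq_zero.mp this.symm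
      exact this.symm
    refine ⟨fun hc0 => hy0 hc0.symm, ?_⟩
    have : (fun i => f y i - (0 : Fin d → ℤ) i) = f y := by funext i; simp
    rw [this]
    exact hnorm
  have hinj : Set.InjOn f {y : Vtx d n | (torus d ρ p n).Adj u y} := by
    intro y1 h1 y2 h2 he
    have hc1 := (hfspec y1 h1).1
    have hc2 := (hfspec y2 h2).1
    funext i
    have e1 := hc1 i
    rw [he, hc2 i] at e1
    exact (sub_left_injective e1).symm
  calc {y : Vtx d n | (torus d ρ p n).Adj u y}.ncard
      = (f '' {y : Vtx d n | (torus d ρ p n).Adj u y}).ncard :=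
        (Set.ncard_image_of_injOn hinj).symm
  _ ≤ {z | (latticeZ d ρ p).Adj 0 z}.ncard := by
      apply Set.ncard_le_ncard _ (aux_nbr_finite d ρ p 0)
      rintro z ⟨y, hy, rfl⟩
      exact hmaps y hy
  _ = degZ d ρ p := rfl

end Aux2


section Aux3

variable (d ρ : ℕ) (p : ℝ≥0∞) [Fact (1 ≤ p)] (r n : ℕ) [NeZero n]

/-- Unnormalized measure of an event. -/
def probNum (a b : ℝ) (A : Set (Conf d n)) : ℝ :=
  ∑' σ : ↥A, weight d ρ p n a b σ

lemma aux_probNum_eq_sum (a b : ℝ) (A : Set (Conf d n)) :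
    probNum d ρ p n a b A
      = ∑ σ : Conf d n, A.indicator (weight d ρ p n a b) σ := by
  rw [probNum, tsum_subtype, tsum_fintype]

lemma aux_partZ_eq (a b : ℝ) :
    partZ d ρ p n a b = ∑ σ : Conf d n, weight d ρ p n a b σ := by
  rw [partZ, tsum_fintype]

lemma aux_partZ_pos (a b : ℝ) : 0 < partZ d ρ p n a b := by
  rw [aux_partZ_eq]
  apply Finset.sum_pos (fun σ _ => Real.exp_pos _)
  exact ⟨fun _ => true, Finset.mem_univ _⟩

lemma aux_probNum_nonneg (a b : ℝ) (A : Set (Conf d n)) :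
    0 ≤ probNum d ρ p n a b A := by
  rw [aux_probNum_eq_sum]
  apply Finset.sum_nonneg
  intro σ _
  exact Set.indicator_nonneg (fun τ _ => (Real.exp_pos _).le) σ

lemma aux_probNum_le_partZ (a b : ℝ) (A : Set (Conf d n)) :
    probNum d ρ p n a b A ≤ partZ d ρ p n a b := by
  rw [aux_probNum_eq_sum, aux_partZ_eq]
  apply Finset.sum_le_sum
  intro σ _
  exact Set.indicator_le_self' (fun τ _ => (Real.exp_pos _).le) σ

lemma aux_probNum_compl (a b : ℝ) (A : Set (Conf d n)) :
    probNum d ρ p n a b Aᶜ = partZ d ρ p n a b - probNum d ρ p n a b A := by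
  classical
  rw [aux_probNum_eq_sum, aux_probNum_eq_sum, aux_partZ_eq, eq_sub_iff_add_eq,
    ← Finset.sum_add_distrib]
  congr 1
  funext σ
  classical
  by_cases h : σ ∈ A <;> simp [Set.indicator_apply, h]

lemma aux_prob_eq (a b : ℝ) (A : Set (Conf d n)) :
    prob d ρ p n a b A = probNum d ρ p n a b A / partZ d ρ p n a b := rfl

/-- Indicator-style edge value. -/
def valE (σ : Conf d n) (e : Sym2 (Vtx d n)) : ℝ := by
  classical exact
  if e ∈ (torus d ρ p n).edgeSet then
    Sym2.lift ⟨fun x y => spin (σ x) * spin (σ y), fun _ _ => mul_comm _ _⟩ e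
  else 0

lemma aux_pairSum_eq (σ : Conf d n) :
    pairSum d ρ p n σ = ∑ e : Sym2 (Vtx d n), valE d ρ p n σ e := by
  classical
  rw [pairSum, tsum_subtype, tsum_fintype]
  congr 1
  funext e
  rw [Set.indicator_apply, valE]

lemma aux_hamiltonian_eq (a b : ℝ) (σ : Conf d n) :
    hamiltonian d ρ p n a b σ
      = a * (∑ x : Vtx d n, spin (σ x)) + b * ∑ e : Sym2 (Vtx d n), valE d ρ p n σ e := by
  rw [hamiltonian, tsum_fintype, aux_pairSum_eq]

/-- Flip a configuration on a set of sites. -/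
def flipS (S : Set (Vtx d n)) (σ : Conf d n) : Conf d n := by
  classical exact fun y => if y ∈ S then !(σ y) else σ y

lemma aux_flipS_invol (S : Set (Vtx d n)) : Function.Involutive (flipS d n S) := by
  intro σ
  funext y
  unfold flipS
  by_cases h : y ∈ S <;> simp [h]

lemma aux_sum_flip (S : Set (Vtx d n)) (F : Conf d n → ℝ) :
    ∑ σ : Conf d n, F (flipS d n S σ) = ∑ σ : Conf d n, F σ :=
  Fintype.sum_bijective _ (aux_flipS_invol d n S).bijective _ _ (fun _ => rfl)

lemma aux_spin_not (t : Bool) : spin (!t) = -spin t := by cases t <;> simp [spin]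

lemma aux_spin_abs (t : Bool) : |spin t| = 1 := by cases t <;> simp [spin]

end Aux3


section Aux4

variable (d ρ : ℕ) (p : ℝ≥0∞) [Fact (1 ≤ p)] (r n : ℕ) [NeZero n]

/-- The all-minus local configuration. -/
def negCfg : LocalConfig d ρ p r := fun _ => false

/-- The set of positive sites of the translate of `η` at `x`. -/
def Sset (x : Vtx d n) (η : LocalConfig d ρ p r) : Set (Vtx d n) :=
  (fun v : ↥(refBall d ρ p r) => embx d n x v.1) '' {v | η v = true}

lemma aux_ball_coord' {v : Fin d → ℤ} (hv : v ∈ refBall d ρ p r) (i : Fin d) :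
    |v i| ≤ (ρ : ℤ) * (r + 1) :=
  (aux_mem_refBall_coord d ρ p r hv i).trans (by nlinarith [Int.ofNat_nonneg ρ])

lemma aux_mem_Sset (hn : 2 * ρ * (r + 1) < n) (x : Vtx d n) (η : LocalConfig d ρ p r)
    (v : ↥(refBall d ρ p r)) :
    embx d n x v.1 ∈ Sset d ρ p r n x η ↔ η v = true := by
  constructor
  · rintro ⟨w, hw, he⟩
    have : w = v := by
      apply Subtype.ext
      exact aux_embx_inj d ρ r n hn x (fun i => aux_ball_coord' d ρ p r w.2 i)
        (fun i => aux_ball_coord' d ρ p r v.2 i) he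
    rwa [this] at hw
  · intro h
    exact ⟨v, h, rfl⟩

lemma aux_Sset_ncard (hn : 2 * ρ * (r + 1) < n) (x : Vtx d n) (η : LocalConfig d ρ p r) :
    (Sset d ρ p r n x η).ncard = kOf d ρ p r η := by
  rw [Sset, Set.ncard_image_of_injOn]
  · rfl
  · intro v1 _ v2 _ he
    apply Subtype.ext
    exact aux_embx_inj d ρ r n hn x (fun i => aux_ball_coord' d ρ p r v1.2 i)
      (fun i => aux_ball_coord' d ρ p r v2.2 i) he

lemma aux_flipS_apply (S : Set (Vtx d n)) (σ : Conf d n) (y : Vtx d n) :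
    flipS d n S σ y
      = @ite _ (y ∈ S) (Classical.propDecidable _) (!(σ y)) (σ y) := rfl

lemma aux_occursAt_flip (hn : 2 * ρ * (r + 1) < n) (x : Vtx d n)
    (η : LocalConfig d ρ p r) (σ : Conf d n) :
    occursAt d ρ p r n η x (flipS d n (Sset d ρ p r n x η) σ)
      ↔ occursAt d ρ p r n (negCfg d ρ p r) x σ := by
  unfold occursAt
  apply forall_congr'
  intro v
  have hemb : (x + fun i => ((v.1 i : ZMod n))) = embx d n x v.1 := rfl
  rw [hemb]
  rw [aux_flipS_apply]
  cases hv : η v with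
  | true =>
    rw [if_pos ((aux_mem_Sset d ρ p r n hn x η v).mpr hv)]
    simp [negCfg, Bool.not_eq_true']
  | false =>
    rw [if_neg (fun hc => by
      rw [(aux_mem_Sset d ρ p r n hn x η v).mp hc] at hv; exact Bool.true_eq_false.mp hv)]
    simp [negCfg]

lemma aux_sum_spin_flip (hn : 2 * ρ * (r + 1) < n) (x : Vtx d n)
    (η : LocalConfig d ρ p r) (σ : Conf d n)
    (hσ : occursAt d ρ p r n (negCfg d ρ p r) x σ) :
    ∑ y : Vtx d n, spin (flipS d n (Sset d ρ p r n x η) σ y)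
      = (∑ y : Vtx d n, spin (σ y)) + 2 * kOf d ρ p r η := by
  classical
  have hpt : ∀ y : Vtx d n, spin (flipS d n (Sset d ρ p r n x η) σ y)
      = spin (σ y) + (if y ∈ Sset d ρ p r n x η then 2 else 0) := by
    intro y
    rw [aux_flipS_apply]
    by_cases hy : y ∈ Sset d ρ p r n x η
    · rw [if_pos hy, if_pos hy]
      obtain ⟨v, hv, rfl⟩ := hy
      have : σ (embx d n x v.1) = false := hσ v
      rw [this]
      simp [spin]
      norm_num
    · rw [if_neg hy, if_neg hy, add_zero]
  calc ∑ y : Vtx d n, spin (flipS d n (Sset d ρ p r n x η) σ y)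
      = ∑ y : Vtx d n, (spin (σ y) + (if y ∈ Sset d ρ p r n x η then 2 else 0)) := by
        exact Finset.sum_congr rfl (fun y _ => hpt y)
  _ = (∑ y : Vtx d n, spin (σ y))
        + ∑ y : Vtx d n, (if y ∈ Sset d ρ p r n x η then (2:ℝ) else 0) := by
        rw [Finset.sum_add_distrib]
  _ = (∑ y : Vtx d n, spin (σ y)) + 2 * kOf d ρ p r η := by
        congr 1
        rw [← Finset.sum_filter, Finset.sum_const, ← aux_Sset_ncard d ρ p r n hn x η]
        have : (Finset.univ.filter (· ∈ Sset d ρ p r n x η)).card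
            = (Sset d ρ p r n x η).ncard := by
          rw [← Set.ncard_coe_finset]
          congr 1
          ext y
          simp
        rw [this]
        push_cast
        ring

end Aux4


section Aux5

variable (d ρ : ℕ) (p : ℝ≥0∞) [Fact (1 ≤ p)] (r n : ℕ) [NeZero n]

/-- Edges with exactly one endpoint in the positive set. -/
def EdgeOne (x : Vtx d n) (η : LocalConfig d ρ p r) : Set (Sym2 (Vtx d n)) :=
  {e | e ∈ (torus d ρ p n).edgeSet ∧ ∃ u y, e = s(u, y) ∧
    u ∈ Sset d ρ p r n x η ∧ y ∉ Sset d ρ p r n x η}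

lemma aux_edgeOne_ncard (hn : 2 * ρ * (r + 1) < n) {η : LocalConfig d ρ p r}
    (hclean : Clean d ρ p r η) (x : Vtx d n) :
    (EdgeOne d ρ p r n x η).ncard = perim d ρ p r η := by
  classical
  set S := Sset d ρ p r n x η with hS
  set G := torus d ρ p n
  set K : Finset (Vtx d n × Vtx d n) :=
    Finset.univ.filter (fun q => q.1 ∈ S ∧ G.Adj q.1 q.2) with hK
  set A1 : Finset (Vtx d n × Vtx d n) := K.filter (fun q => q.2 ∈ S) with hA1
  set A2 : Finset (Vtx d n × Vtx d n) := K.filter (fun q => ¬ q.2 ∈ S) with hA2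
  set E1 : Finset (Sym2 (Vtx d n)) :=
    Finset.univ.filter (fun e => e ∈ EdgeOne d ρ p r n x η) with hE1
  set Sfin : Finset (Vtx d n) := Finset.univ.filter (· ∈ S) with hSfin
  have hcoord : ∀ v : ↥(refBall d ρ p r), ∀ i, |v.1 i| ≤ (ρ : ℤ) * r :=
    fun v i => aux_mem_refBall_coord d ρ p r v.2 i
  -- step 1 : K.card = degZ * k
  have h1 : K.card = degZ d ρ p * kOf d ρ p r η := by
    have hfib := Finset.card_eq_sum_card_fiberwise
      (f := Prod.fst) (s := K) (t := Sfin)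
      (fun q hq => by
        rw [hSfin]
        simp only [Finset.mem_coe, Finset.mem_filter, Finset.mem_univ, true_and]
        exact (Finset.mem_filter.mp (Finset.mem_coe.mp hq)).2.1)
    rw [hfib]
    have hdeg : ∀ u ∈ Sfin, (K.filter (fun q => q.1 = u)).card = degZ d ρ p := by
      intro u hu
      have huS : u ∈ S := by
        rw [hSfin] at hu
        simpa using hu
      set Nu : Finset (Vtx d n) := Finset.univ.filter (fun y => G.Adj u y) with hNu
      have hcardNu : Nu.card = degZ d ρ p := by
        obtain ⟨v, hv, rfl⟩ := huS
        rw [← Set.ncard_coe_finset]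
        have : (↑Nu : Set (Vtx d n)) = {y : Vtx d n | G.Adj (embx d n x v.1) y} := by
          ext y; simp [hNu]
        rw [this]
        exact aux_pos_deg d ρ p r n hn hclean x hv
      rw [← hcardNu]
      apply Finset.card_bij (fun q _ => q.2)
      · intro q hq
        simp only [Finset.mem_filter] at hq
        obtain ⟨hqK, hq1⟩ := hq
        rw [hNu]
        simp only [Finset.mem_filter, Finset.mem_univ, true_and]
        rw [← hq1]
        exact (Finset.mem_filter.mp hqK).2.2
      · intro q1 h1' q2 h2' he
        simp only [Finset.mem_filter] at h1' h2'
        exact Prod.ext (h1'.2.trans h2'.2.symm) he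
      · intro y hy
        rw [hNu] at hy
        simp only [Finset.mem_filter, Finset.mem_univ, true_and] at hy
        exact ⟨(u, y), Finset.mem_filter.mpr
          ⟨Finset.mem_filter.mpr ⟨Finset.mem_univ _, huS, hy⟩, rfl⟩, rfl⟩
    rw [Finset.sum_congr rfl hdeg, Finset.sum_const, smul_eq_mul]
    have : Sfin.card = kOf d ρ p r η := by
      rw [← aux_Sset_ncard d ρ p r n hn x η, ← Set.ncard_coe_finset]
      congr 1
      ext y
      simp [hSfin, hS]
    rw [this, mul_comm]
  -- step 2 : A1.card = ncard of positive adjacent pairs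
  have h2 : A1.card = Set.ncard {q : ↥(refBall d ρ p r) × ↥(refBall d ρ p r) |
      (latticeZ d ρ p).Adj q.1.1 q.2.1 ∧ η q.1 = true ∧ η q.2 = true} := by
    rw [← Set.ncard_coe_finset]
    have himg : (↑A1 : Set (Vtx d n × Vtx d n))
        = (fun q : ↥(refBall d ρ p r) × ↥(refBall d ρ p r) =>
            (embx d n x q.1.1, embx d n x q.2.1)) ''
          {q | (latticeZ d ρ p).Adj q.1.1 q.2.1 ∧ η q.1 = true ∧ η q.2 = true} := by
      ext q
      simp only [Finset.coe_filter, Set.mem_setOf_eq, Set.mem_image, hA1, hK,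
        Finset.mem_filter, Finset.mem_univ, true_and]
      constructor
      · rintro ⟨⟨hq1, hadj⟩, hq2⟩
        obtain ⟨v, hv, hv'⟩ := hq1
        obtain ⟨w, hw, hw'⟩ := hq2
        rw [← hv', ← hw'] at hadj
        refine ⟨(v, w), ⟨?_, hv, hw⟩, ?_⟩
        · exact (aux_adj_iff d ρ p r n hn x (hcoord v) (hcoord w)).mp hadj
        · exact Prod.ext hv' hw'
      · rintro ⟨⟨v, w⟩, ⟨hadj, hv, hw⟩, rfl⟩
        refine ⟨⟨⟨v, hv, rfl⟩, ?_⟩, ⟨w, hw, rfl⟩⟩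
        exact (aux_adj_iff d ρ p r n hn x (hcoord v) (hcoord w)).mpr hadj
    rw [himg]
    apply Set.ncard_image_of_injOn
    intro q1 _ q2 _ he
    obtain ⟨he1, he2⟩ := Prod.mk.injEq _ _ _ _ ▸ he
    have e1 : q1.1 = q2.1 := Subtype.ext
      (aux_embx_inj d ρ r n hn x (fun i => aux_ball_coord' d ρ p r q1.1.2 i)
        (fun i => aux_ball_coord' d ρ p r q2.1.2 i) he1)
    have e2 : q1.2 = q2.2 := Subtype.ext
      (aux_embx_inj d ρ r n hn x (fun i => aux_ball_coord' d ρ p r q1.2.2 i)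
        (fun i => aux_ball_coord' d ρ p r q2.2.2 i) he2)
    exact Prod.ext e1 e2
  -- step 3 : A2.card = E1.card
  have h3 : A2.card = E1.card := by
    apply Finset.card_bij (s := A2) (t := E1) (fun q _ => s(q.1, q.2))
    · intro q hq
      simp only [hA2, hK, Finset.mem_filter, Finset.mem_univ, true_and] at hq
      obtain ⟨⟨hq1, hadj⟩, hq2⟩ := hq
      rw [hE1]
      simp only [Finset.mem_filter, Finset.mem_univ, true_and]
      exact ⟨hadj, q.1, q.2, rfl, hq1, hq2⟩
    · intro q1 hq1 q2 hq2 he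
      simp only [hA2, hK, Finset.mem_filter, Finset.mem_univ, true_and] at hq1 hq2
      rcases Sym2.eq_iff.mp he with ⟨e1, e2⟩ | ⟨e1, e2⟩
      · exact Prod.ext e1 e2
      · exact absurd (e2 ▸ hq2.1.1) hq1.2
    · intro e he
      rw [hE1] at he
      simp only [Finset.mem_filter, Finset.mem_univ, true_and] at he
      obtain ⟨heE, u, y, rfl, hu, hy⟩ := he
      refine ⟨(u, y), ?_, rfl⟩
      simp only [hA2, hK, Finset.mem_filter, Finset.mem_univ, true_and]
      exact ⟨⟨hu, heE⟩, hy⟩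
  -- step 4 : split
  have h4 : A1.card + A2.card = K.card := by
    rw [hA1, hA2]
    exact Finset.card_filter_add_card_filter_not _
  -- conclude
  have h5 : (EdgeOne d ρ p r n x η).ncard = E1.card := by
    rw [← Set.ncard_coe_finset]
    congr 1
    ext e
    simp [hE1]
  rw [h5, ← h3, perim, ← h2]
  omega

end Aux5


section Aux6

variable (d ρ : ℕ) (p : ℝ≥0∞) [Fact (1 ≤ p)] (r n : ℕ) [NeZero n]

lemma aux_sigma_false (x : Vtx d n) {σ : Conf d n}
    (hσ : occursAt d ρ p r n (negCfg d ρ p r) x σ) {w : Fin d → ℤ}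
    (hw : w ∈ refBall d ρ p r) : σ (embx d n x w) = false :=
  hσ ⟨w, hw⟩

lemma aux_valE_flip_pt (hn : 2 * ρ * (r + 1) < n) {η : LocalConfig d ρ p r}
    (hclean : Clean d ρ p r η) (x : Vtx d n) {σ : Conf d n}
    (hσ : occursAt d ρ p r n (negCfg d ρ p r) x σ) (e : Sym2 (Vtx d n)) :
    valE d ρ p n (flipS d n (Sset d ρ p r n x η) σ) e
      = valE d ρ p n σ e
        + (@ite _ (e ∈ EdgeOne d ρ p r n x η) (Classical.propDecidable _)
            (-2 : ℝ) 0) := by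
  classical
  set S := Sset d ρ p r n x η with hS
  induction e using Sym2.ind with
  | _ α β =>
    by_cases heE : s(α, β) ∈ (torus d ρ p n).edgeSet
    case neg =>
      unfold valE
      rw [if_neg heE, if_neg heE, if_neg (fun hc => heE hc.1)]
      norm_num
    case pos =>
      have hadj : (torus d ρ p n).Adj α β := heE
      unfold valE
      rw [if_pos heE, if_pos heE, Sym2.lift_mk, Sym2.lift_mk]
      simp only
      -- helper : σ is false at any element of S and at any torus-neighbor of an element of S
      have hSfalse : ∀ y ∈ S, σ y = false := by
        rintro y ⟨v, hv, rfl⟩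
        exact aux_sigma_false d ρ p r n x hσ v.2
      have hNfalse : ∀ y ∈ S, ∀ z, (torus d ρ p n).Adj y z → σ z = false := by
        rintro y ⟨v, hv, rfl⟩ z hyz
        obtain ⟨w, hwB, rfl, _⟩ := aux_adj_to d ρ p r n hn hclean x hv hyz
        exact aux_sigma_false d ρ p r n x hσ hwB
      by_cases hα : α ∈ S <;> by_cases hβ : β ∈ S
      · -- both in S
        rw [aux_flipS_apply, aux_flipS_apply, if_pos hα, if_pos hβ,
          aux_spin_not, aux_spin_not, if_neg]
        · ring
        · rintro ⟨-, u, y, heq, hu, hy⟩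
          rcases Sym2.eq_iff.mp heq.symm with ⟨rfl, rfl⟩ | ⟨rfl, rfl⟩
          · exact hy hβ
          · exact hy hα
      · -- α in S, β not
        rw [aux_flipS_apply, aux_flipS_apply, if_pos hα, if_neg hβ,
          if_pos ⟨heE, α, β, rfl, hα, hβ⟩, hSfalse α hα, hNfalse α hα β hadj]
        simp [spin]
        norm_num
      · -- β in S, α not
        rw [aux_flipS_apply, aux_flipS_apply, if_neg hα, if_pos hβ,
          if_pos ⟨heE, β, α, Sym2.eq_swap.symm, hβ, hα⟩, hSfalse β hβ,
          hNfalse β hβ α hadj.symm]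
        simp [spin]
        norm_num
      · -- neither
        rw [aux_flipS_apply, aux_flipS_apply, if_neg hα, if_neg hβ, if_neg]
        · ring
        · rintro ⟨-, u, y, heq, hu, hy⟩
          rcases Sym2.eq_iff.mp heq.symm with ⟨rfl, rfl⟩ | ⟨rfl, rfl⟩
          · exact hα hu
          · exact hβ hu

lemma aux_sum_valE_flip (hn : 2 * ρ * (r + 1) < n) {η : LocalConfig d ρ p r}
    (hclean : Clean d ρ p r η) (x : Vtx d n) {σ : Conf d n}
    (hσ : occursAt d ρ p r n (negCfg d ρ p r) x σ) :
    ∑ e : Sym2 (Vtx d n), valE d ρ p n (flipS d n (Sset d ρ p r n x η) σ) e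
      = (∑ e : Sym2 (Vtx d n), valE d ρ p n σ e) - 2 * perim d ρ p r η := by
  classical
  rw [Finset.sum_congr rfl
    (fun e _ => aux_valE_flip_pt d ρ p r n hn hclean x hσ e),
    Finset.sum_add_distrib]
  congr 1
  have hset : (↑(Finset.univ.filter (· ∈ EdgeOne d ρ p r n x η)) : Set (Sym2 (Vtx d n)))
      = EdgeOne d ρ p r n x η := by
    ext e; simp
  rw [← Finset.sum_filter, Finset.sum_const, nsmul_eq_mul, ← Set.ncard_coe_finset,
    hset, aux_edgeOne_ncard d ρ p r n hn hclean x]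
  ring

lemma aux_weight_flip (hn : 2 * ρ * (r + 1) < n) {η : LocalConfig d ρ p r}
    (hclean : Clean d ρ p r η) (x : Vtx d n) (a b : ℝ) {σ : Conf d n}
    (hσ : occursAt d ρ p r n (negCfg d ρ p r) x σ) :
    weight d ρ p n a b (flipS d n (Sset d ρ p r n x η) σ)
      = Real.exp (2 * a * kOf d ρ p r η - 2 * b * perim d ρ p r η)
        * weight d ρ p n a b σ := by
  rw [weight, weight, ← Real.exp_add]
  congr 1
  rw [aux_hamiltonian_eq, aux_hamiltonian_eq,
    aux_sum_spin_flip d ρ p r n hn x η σ hσ,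
    aux_sum_valE_flip d ρ p r n hn hclean x hσ]
  ring

lemma aux_probNum_event (hn : 2 * ρ * (r + 1) < n) {η : LocalConfig d ρ p r}
    (hclean : Clean d ρ p r η) (x : Vtx d n) (a b : ℝ) :
    probNum d ρ p n a b (event d ρ p r n η x)
      = Real.exp (2 * a * kOf d ρ p r η - 2 * b * perim d ρ p r η)
        * probNum d ρ p n a b (event d ρ p r n (negCfg d ρ p r) x) := by
  classical
  rw [aux_probNum_eq_sum, aux_probNum_eq_sum]
  rw [← aux_sum_flip d n (Sset d ρ p r n x η)
    (fun σ => (event d ρ p r n η x).indicator (weight d ρ p n a b) σ)]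
  rw [Finset.mul_sum]
  apply Finset.sum_congr rfl
  intro σ _
  rw [Set.indicator_apply, Set.indicator_apply]
  have hmem : flipS d n (Sset d ρ p r n x η) σ ∈ event d ρ p r n η x
      ↔ σ ∈ event d ρ p r n (negCfg d ρ p r) x :=
    aux_occursAt_flip d ρ p r n hn x η σ
  by_cases hσ : σ ∈ event d ρ p r n (negCfg d ρ p r) x
  · rw [if_pos (hmem.mpr hσ), if_pos hσ]
    exact aux_weight_flip d ρ p r n hn hclean x a b hσ
  · rw [if_neg (fun hc => hσ (hmem.mp hc)), if_neg hσ, mul_zero]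

end Aux6


section Aux7

variable (d ρ : ℕ) (p : ℝ≥0∞) [Fact (1 ≤ p)] (r n : ℕ) [NeZero n]

lemma aux_valE_abs_le (σ : Conf d n) (e : Sym2 (Vtx d n)) : |valE d ρ p n σ e| ≤ 1 := by
  induction e using Sym2.ind with
  | _ α β =>
    unfold valE
    split
    · rw [Sym2.lift_mk]
      simp only
      rw [abs_mul, aux_spin_abs, aux_spin_abs, mul_one]
    · norm_num

lemma aux_valE_single_eq {u : Vtx d n} (σ : Conf d n) (e : Sym2 (Vtx d n))
    (he : u ∉ e) : valE d ρ p n (flipS d n {u} σ) e = valE d ρ p n σ e := by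
  induction e using Sym2.ind with
  | _ α β =>
    have hα : α ≠ u := fun h => he (by rw [h]; exact Sym2.mem_mk_left u β)
    have hβ : β ≠ u := fun h => he (by rw [h]; exact Sym2.mem_mk_right α u)
    unfold valE
    split
    · rw [Sym2.lift_mk, Sym2.lift_mk]
      simp only
      rw [aux_flipS_apply, aux_flipS_apply, if_neg (by simpa using hα),
        if_neg (by simpa using hβ)]
    · rfl

open Classical in
lemma aux_incidence_card_le (hn : 2 * ρ * (r + 1) < n) (u : Vtx d n) :
    (Finset.univ.filter
        (fun e : Sym2 (Vtx d n) => e ∈ (torus d ρ p n).edgeSet ∧ u ∈ e)).card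
      ≤ degZ d ρ p := by
  classical
  set Nu : Finset (Vtx d n) := Finset.univ.filter (fun y => (torus d ρ p n).Adj u y)
    with hNu
  have hcard : Nu.card ≤ degZ d ρ p := by
    rw [← Set.ncard_coe_finset]
    have : (↑Nu : Set (Vtx d n)) = {y | (torus d ρ p n).Adj u y} := by
      ext y; simp [hNu]
    rw [this]
    exact aux_deg_le d ρ p r n hn u
  refine le_trans (Finset.card_le_card_of_injOn
    (fun e => if h : u ∈ e then Sym2.Mem.other h else u) ?_ ?_) hcard
  · intro e he
    simp only [Finset.mem_coe, Finset.mem_filter, Finset.mem_univ, true_and] at he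
    obtain ⟨heE, hue⟩ := he
    show (if h : u ∈ e then Sym2.Mem.other h else u) ∈ Nu
    rw [dif_pos hue, hNu]
    simp only [Finset.mem_filter, Finset.mem_univ, true_and]
    have := Sym2.other_spec hue
    rw [← this] at heE
    exact heE
  · intro e1 h1 e2 h2 he
    simp only [Finset.coe_filter, Set.mem_setOf_eq, Finset.mem_univ, true_and] at h1 h2
    have he' : (if h : u ∈ e1 then Sym2.Mem.other h else u)
        = (if h : u ∈ e2 then Sym2.Mem.other h else u) := he
    rw [dif_pos h1.2, dif_pos h2.2] at he'
    rw [← Sym2.other_spec h1.2, ← Sym2.other_spec h2.2, he']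

lemma aux_sum_spin_single (u : Vtx d n) (σ : Conf d n) (hσu : σ u = false) :
    ∑ y : Vtx d n, spin (flipS d n {u} σ y) = (∑ y : Vtx d n, spin (σ y)) + 2 := by
  have h : ∑ y : Vtx d n, (spin (flipS d n {u} σ y) - spin (σ y)) = 2 := by
    rw [Finset.sum_eq_single u]
    · rw [aux_flipS_apply, if_pos (Set.mem_singleton u), hσu]
      simp [spin]
      norm_num
    · intro y _ hy
      rw [aux_flipS_apply, if_neg (by simpa using hy)]
      ring
    · intro h
      exact absurd (Finset.mem_univ u) h
  rw [Finset.sum_sub_distrib] at h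
  linarith

lemma aux_weight_single_flip (hn : 2 * ρ * (r + 1) < n) (u : Vtx d n) (a b : ℝ)
    (σ : Conf d n) (hσu : σ u = false) :
    weight d ρ p n a b (flipS d n {u} σ)
      ≤ Real.exp (2 * a + 2 * |b| * degZ d ρ p) * weight d ρ p n a b σ := by
  classical
  rw [weight, weight, ← Real.exp_add, Real.exp_le_exp]
  rw [aux_hamiltonian_eq, aux_hamiltonian_eq, aux_sum_spin_single d n u σ hσu]
  have hpair : |(∑ e : Sym2 (Vtx d n), valE d ρ p n (flipS d n {u} σ) e)
      - ∑ e : Sym2 (Vtx d n), valE d ρ p n σ e| ≤ 2 * degZ d ρ p := by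
    rw [← Finset.sum_sub_distrib]
    refine le_trans (Finset.abs_sum_le_sum_abs _ _) ?_
    have hpt : ∀ e : Sym2 (Vtx d n),
        |valE d ρ p n (flipS d n {u} σ) e - valE d ρ p n σ e|
          ≤ if (e ∈ (torus d ρ p n).edgeSet ∧ u ∈ e) then 2 else 0 := by
      intro e
      by_cases hue : u ∈ e
      · by_cases heE : e ∈ (torus d ρ p n).edgeSet
        · rw [if_pos ⟨heE, hue⟩]
          calc |valE d ρ p n (flipS d n {u} σ) e - valE d ρ p n σ e|
              ≤ |valE d ρ p n (flipS d n {u} σ) e| + |valE d ρ p n σ e| := abs_sub _ _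
          _ ≤ 1 + 1 := add_le_add (aux_valE_abs_le d ρ p n _ e) (aux_valE_abs_le d ρ p n σ e)
          _ = 2 := by norm_num
        · have hz : ∀ τ : Conf d n, valE d ρ p n τ e = 0 := by
            intro τ
            induction e using Sym2.ind with
            | _ α β =>
              unfold valE
              rw [if_neg heE]
          rw [hz, hz]
          split <;> norm_num
      · rw [aux_valE_single_eq d ρ p n σ e hue, sub_self, abs_zero]
        split <;> norm_num
    refine le_trans (Finset.sum_le_sum (fun e _ => hpt e)) ?_
    rw [← Finset.sum_filter, Finset.sum_const, nsmul_eq_mul]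
    have := aux_incidence_card_le d ρ p r n hn u
    have h2 : ((Finset.univ.filter
        (fun e : Sym2 (Vtx d n) => e ∈ (torus d ρ p n).edgeSet ∧ u ∈ e)).card : ℝ)
        ≤ (degZ d ρ p : ℝ) := by exact_mod_cast this
    nlinarith [h2]
  have hb : b * (∑ e : Sym2 (Vtx d n), valE d ρ p n (flipS d n {u} σ) e)
      - b * (∑ e : Sym2 (Vtx d n), valE d ρ p n σ e) ≤ 2 * |b| * degZ d ρ p := by
    rw [← mul_sub]
    calc b * _ ≤ |b * ((∑ e : Sym2 (Vtx d n), valE d ρ p n (flipS d n {u} σ) e)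
        - ∑ e : Sym2 (Vtx d n), valE d ρ p n σ e)| := le_abs_self _
    _ = |b| * |(∑ e : Sym2 (Vtx d n), valE d ρ p n (flipS d n {u} σ) e)
        - ∑ e : Sym2 (Vtx d n), valE d ρ p n σ e| := abs_mul _ _
    _ ≤ |b| * (2 * degZ d ρ p) := by
        exact mul_le_mul_of_nonneg_left hpair (abs_nonneg b)
    _ = 2 * |b| * degZ d ρ p := by ring
  nlinarith [hb]

lemma aux_probNum_plus_le (hn : 2 * ρ * (r + 1) < n) (u : Vtx d n) (a b : ℝ) :
    probNum d ρ p n a b {σ : Conf d n | σ u = true}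
      ≤ Real.exp (2 * a + 2 * |b| * degZ d ρ p) * partZ d ρ p n a b := by
  classical
  rw [aux_probNum_eq_sum, aux_partZ_eq,
    ← aux_sum_flip d n {u} (fun σ => ({σ : Conf d n | σ u = true}).indicator
      (weight d ρ p n a b) σ), Finset.mul_sum]
  apply Finset.sum_le_sum
  intro σ _
  rw [Set.indicator_apply]
  have hflipu : flipS d n {u} σ u = !(σ u) := by
    rw [aux_flipS_apply, if_pos (Set.mem_singleton u)]
  by_cases hσu : σ u = false
  · rw [if_pos (show flipS d n {u} σ ∈ {τ : Conf d n | τ u = true} by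
      rw [Set.mem_setOf_eq, hflipu, hσu]; rfl)]
    exact aux_weight_single_flip d ρ p r n hn u a b σ hσu
  · rw [if_neg (show ¬ flipS d n {u} σ ∈ {τ : Conf d n | τ u = true} by
      intro hc
      have hσt : σ u = true := by revert hσu; cases (σ u) <;> simp
      rw [Set.mem_setOf_eq, hflipu, hσt] at hc
      simp at hc)]
    have h1 : (0:ℝ) < weight d ρ p n a b σ := by rw [weight]; exact Real.exp_pos _
    positivity

lemma aux_event_neg_lower (hn : 2 * ρ * (r + 1) < n) (x : Vtx d n) (a b : ℝ) :
    partZ d ρ p n a b * (1 - ((refBall d ρ p r).ncard : ℝ)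
        * Real.exp (2 * |b| * degZ d ρ p) * Real.exp (2 * a))
      ≤ probNum d ρ p n a b (event d ρ p r n (negCfg d ρ p r) x) := by
  classical
  haveI : Fintype ↥(refBall d ρ p r) := (aux_refBall_finite d ρ p r).fintype
  set A := event d ρ p r n (negCfg d ρ p r) x with hA
  have hcompl := aux_probNum_compl d ρ p n a b A
  have hsub : probNum d ρ p n a b Aᶜ
      ≤ ∑ v : ↥(refBall d ρ p r),
          probNum d ρ p n a b {σ : Conf d n | σ (embx d n x v.1) = true} := by
    rw [aux_probNum_eq_sum]
    have hswap : ∑ v : ↥(refBall d ρ p r),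
        probNum d ρ p n a b {σ : Conf d n | σ (embx d n x v.1) = true}
        = ∑ σ : Conf d n, ∑ v : ↥(refBall d ρ p r),
            ({σ : Conf d n | σ (embx d n x v.1) = true}).indicator
              (weight d ρ p n a b) σ := by
      rw [Finset.sum_comm]
      exact Finset.sum_congr rfl (fun v _ => aux_probNum_eq_sum d ρ p n a b _)
    rw [hswap]
    apply Finset.sum_le_sum
    intro σ _
    rw [Set.indicator_apply]
    by_cases hσ : σ ∈ Aᶜ
    · rw [if_pos hσ]
      have : ¬ occursAt d ρ p r n (negCfg d ρ p r) x σ := hσ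
      rw [occursAt] at this
      push_neg at this
      obtain ⟨v₀, hv₀⟩ := this
      have hv₀' : σ (embx d n x v₀.1) = true := by
        have : σ (x + fun i => ((v₀.1 i : ZMod n))) ≠ negCfg d ρ p r v₀ := hv₀
        simpa [negCfg, embx] using this
      refine Finset.single_le_sum (f := fun v : ↥(refBall d ρ p r) =>
        ({σ : Conf d n | σ (embx d n x v.1) = true}).indicator
          (weight d ρ p n a b) σ) ?_ (Finset.mem_univ v₀) |>.trans_eq' ?_
      · intro v _
        exact Set.indicator_nonneg (fun τ _ => (Real.exp_pos _).le) σ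
      · rw [Set.indicator_apply,
          if_pos (show σ ∈ {τ : Conf d n | τ (embx d n x v₀.1) = true} from hv₀')]
    · rw [if_neg hσ]
      apply Finset.sum_nonneg
      intro v _
      exact Set.indicator_nonneg (fun τ _ => (Real.exp_pos _).le) σ
  have hsum : ∑ v : ↥(refBall d ρ p r),
      probNum d ρ p n a b {σ : Conf d n | σ (embx d n x v.1) = true}
      ≤ ((refBall d ρ p r).ncard : ℝ)
        * (Real.exp (2 * a + 2 * |b| * degZ d ρ p) * partZ d ρ p n a b) := by
    refine le_trans (Finset.sum_le_sum (fun v _ =>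
      aux_probNum_plus_le d ρ p r n hn (embx d n x v.1) a b)) ?_
    rw [Finset.sum_const, nsmul_eq_mul]
    have hcard : (Finset.univ : Finset ↥(refBall d ρ p r)).card
        = (refBall d ρ p r).ncard := by
      rw [Finset.card_univ, ← Nat.card_eq_fintype_card, Nat.card_coe_set_eq]
    rw [hcard]
  have hZpos := aux_partZ_pos d ρ p n a b
  have hfinal : probNum d ρ p n a b A
      = partZ d ρ p n a b - probNum d ρ p n a b Aᶜ := by linarith
  rw [hfinal]
  have : ((refBall d ρ p r).ncard : ℝ)
      * (Real.exp (2 * a + 2 * |b| * degZ d ρ p) * partZ d ρ p n a b)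
      = partZ d ρ p n a b * (((refBall d ρ p r).ncard : ℝ)
        * Real.exp (2 * |b| * degZ d ρ p) * Real.exp (2 * a)) := by
    rw [Real.exp_add]
    ring
  nlinarith [hsub, hsum]

end Aux7


section Aux8

variable (d ρ : ℕ) (p : ℝ≥0∞) [Fact (1 ≤ p)] (r n : ℕ) [NeZero n]

lemma aux_Xcount_eq (η : LocalConfig d ρ p r) (σ : Conf d n) :
    ((Xcount d ρ p r n η σ : ℝ))
      = ∑ x : Vtx d n, (@ite _ (occursAt d ρ p r n η x σ)
          (Classical.propDecidable _) (1 : ℝ) 0) := by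
  classical
  rw [Xcount]
  have h1 : {x : Vtx d n | occursAt d ρ p r n η x σ}.ncard
      = (Finset.univ.filter (fun x : Vtx d n => occursAt d ρ p r n η x σ)).card := by
    rw [← Set.ncard_coe_finset]
    congr 1
    ext x
    simp
  rw [h1, Finset.card_filter]
  push_cast
  apply Finset.sum_congr rfl
  intro x _
  split <;> simp

lemma aux_expect_eq (η : LocalConfig d ρ p r) (a b : ℝ) :
    expect d ρ p n a b (fun σ => (Xcount d ρ p r n η σ : ℝ))
      = (∑ x : Vtx d n, probNum d ρ p n a b (event d ρ p r n η x))
          / partZ d ρ p n a b := by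
  classical
  rw [expect, tsum_fintype]
  congr 1
  calc ∑ σ : Conf d n, weight d ρ p n a b σ * ((Xcount d ρ p r n η σ : ℝ))
      = ∑ σ : Conf d n, ∑ x : Vtx d n,
          weight d ρ p n a b σ * (@ite _ (occursAt d ρ p r n η x σ)
            (Classical.propDecidable _) (1 : ℝ) 0) := by
        apply Finset.sum_congr rfl
        intro σ _
        rw [aux_Xcount_eq, Finset.mul_sum]
  _ = ∑ x : Vtx d n, ∑ σ : Conf d n,
          weight d ρ p n a b σ * (@ite _ (occursAt d ρ p r n η x σ)
            (Classical.propDecidable _) (1 : ℝ) 0) := Finset.sum_comm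
  _ = ∑ x : Vtx d n, probNum d ρ p n a b (event d ρ p r n η x) := by
        apply Finset.sum_congr rfl
        intro x _
        rw [aux_probNum_eq_sum]
        apply Finset.sum_congr rfl
        intro σ _
        rw [Set.indicator_apply]
        by_cases hσ : occursAt d ρ p r n η x σ
        · rw [if_pos hσ, if_pos (show σ ∈ event d ρ p r n η x from hσ), mul_one]
        · rw [if_neg hσ, if_neg (show ¬ σ ∈ event d ρ p r n η x from hσ), mul_zero]

end Aux8


/-- **Lemma (two-sided expectation bound for clean configurations).**
If `η` is clean and `e^{2a(n)} = c n^{-d/k(η)}`, there is `M₂ > 0` such that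
`c^{k(η)} e^{-2bγ(η)} (1 - M₂ e^{2a(n)}) ≤ E_{a(n),b}[X_n(η)] ≤ c^{k(η)} e^{-2bγ(η)}`
for all admissible `n`. -/
theorem stmt_7
    (d ρ r : ℕ) (hd : 1 ≤ d) (hρ : 1 ≤ ρ) (p : ℝ≥0∞) [Fact (1 ≤ p)]
    (η : LocalConfig d ρ p r) (hclean : Clean d ρ p r η) (hk : 1 ≤ kOf d ρ p r η)
    (c : ℝ) (hc : 0 < c) (b : ℝ) (a : ℕ → ℝ)
    (ha : ∀ n : ℕ, 0 < n →
      Real.exp (2 * a n) = c * (n : ℝ) ^ (-(d : ℝ) / (kOf d ρ p r η : ℝ))) :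
    ∃ M₂ : ℝ, 0 < M₂ ∧ ∀ n : ℕ, 2 * ρ * (r + 1) < n →
      c ^ kOf d ρ p r η * Real.exp (-2 * b * (perim d ρ p r η : ℝ))
          * (1 - M₂ * Real.exp (2 * a n))
        ≤ expect d ρ p n (a n) b (fun σ => (Xcount d ρ p r n η σ : ℝ)) ∧
      expect d ρ p n (a n) b (fun σ => (Xcount d ρ p r n η σ : ℝ))
        ≤ c ^ kOf d ρ p r η * Real.exp (-2 * b * (perim d ρ p r η : ℝ)) := by
  classical
  refine ⟨((refBall d ρ p r).ncard : ℝ) * Real.exp (2 * |b| * degZ d ρ p), ?_, ?_⟩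
  · apply mul_pos _ (Real.exp_pos _)
    have h0 : 0 < (refBall d ρ p r).ncard := by
      rw [Set.ncard_pos (aux_refBall_finite d ρ p r)]
      exact ⟨0, aux_zero_mem_refBall d ρ p r⟩
    exact_mod_cast h0
  · intro n hn
    haveI : NeZero n := ⟨by omega⟩
    have hn0 : (0 : ℝ) < n := by
      have : 0 < n := by omega
      exact_mod_cast this
    have hkne : ((kOf d ρ p r η : ℝ)) ≠ 0 := Nat.cast_ne_zero.mpr (by omega)
    have hZ : 0 < partZ d ρ p n (a n) b := aux_partZ_pos d ρ p n (a n) b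
    have hCpos : (0 : ℝ) < Real.exp (2 * a n * kOf d ρ p r η
        - 2 * b * perim d ρ p r η) := Real.exp_pos _
    have hEx := aux_expect_eq d ρ p r n η (a n) b
    have hper : ∀ x : Vtx d n, probNum d ρ p n (a n) b (event d ρ p r n η x)
        = Real.exp (2 * a n * kOf d ρ p r η - 2 * b * perim d ρ p r η)
          * probNum d ρ p n (a n) b (event d ρ p r n (negCfg d ρ p r) x) :=
      fun x => aux_probNum_event d ρ p r n hn hclean x (a n) b
    have hcardN : Fintype.card (Vtx d n) = n ^ d := by
      rw [Fintype.card_fun, ZMod.card, Fintype.card_fin]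
    -- scalar identity
    have h2ak : Real.exp (2 * a n * kOf d ρ p r η)
        = Real.exp (2 * a n) ^ kOf d ρ p r η := by
      have h : 2 * a n * (kOf d ρ p r η : ℝ) = (kOf d ρ p r η : ℝ) * (2 * a n) := by
        ring
      rw [h, Real.exp_nat_mul]
    have hpow : ((n : ℝ) ^ (-(d : ℝ) / (kOf d ρ p r η : ℝ))) ^ kOf d ρ p r η
        = (n : ℝ) ^ (-(d : ℝ)) := by
      rw [← Real.rpow_natCast ((n : ℝ) ^ (-(d : ℝ) / (kOf d ρ p r η : ℝ)))
        (kOf d ρ p r η), ← Real.rpow_mul hn0.le, div_mul_cancel₀ _ hkne]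
    have hcd : ((n : ℝ)) ^ d * (n : ℝ) ^ (-(d : ℝ)) = 1 := by
      rw [← Real.rpow_natCast (n : ℝ) d, ← Real.rpow_add hn0, add_neg_cancel,
        Real.rpow_zero]
    have hkey : ((Fintype.card (Vtx d n) : ℝ)) * Real.exp (2 * a n * kOf d ρ p r η)
        = c ^ kOf d ρ p r η := by
      rw [hcardN, h2ak, ha n (by omega), mul_pow, hpow]
      push_cast
      calc ((n : ℝ)) ^ d * (c ^ kOf d ρ p r η * (n : ℝ) ^ (-(d : ℝ)))
          = c ^ kOf d ρ p r η * (((n : ℝ)) ^ d * (n : ℝ) ^ (-(d : ℝ))) := by ring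
      _ = c ^ kOf d ρ p r η := by rw [hcd, mul_one]
    have hCid : ((Fintype.card (Vtx d n) : ℝ))
          * Real.exp (2 * a n * kOf d ρ p r η - 2 * b * perim d ρ p r η)
        = c ^ kOf d ρ p r η * Real.exp (-2 * b * (perim d ρ p r η : ℝ)) := by
      rw [sub_eq_add_neg, Real.exp_add, ← mul_assoc, hkey]
      congr 1
      ring_nf
    constructor
    · -- lower bound
      rw [hEx, le_div_iff₀ hZ]
      have hxl : ∀ x : Vtx d n,
          Real.exp (2 * a n * kOf d ρ p r η - 2 * b * perim d ρ p r η)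
            * (partZ d ρ p n (a n) b * (1 - ((refBall d ρ p r).ncard : ℝ)
              * Real.exp (2 * |b| * degZ d ρ p) * Real.exp (2 * a n)))
          ≤ probNum d ρ p n (a n) b (event d ρ p r n η x) := by
        intro x
        rw [hper x]
        exact mul_le_mul_of_nonneg_left
          (aux_event_neg_lower d ρ p r n hn x (a n) b) hCpos.le
      have hsum := Finset.card_nsmul_le_sum Finset.univ
        (fun x : Vtx d n => probNum d ρ p n (a n) b (event d ρ p r n η x)) _
        (fun x _ => hxl x)
      rw [Finset.card_univ, nsmul_eq_mul] at hsum
      refine le_trans (le_of_eq ?_) hsum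
      rw [← hCid]
      ring
    · -- upper bound
      rw [hEx, div_le_iff₀ hZ]
      have hxu : ∀ x : Vtx d n,
          probNum d ρ p n (a n) b (event d ρ p r n η x)
          ≤ Real.exp (2 * a n * kOf d ρ p r η - 2 * b * perim d ρ p r η)
              * partZ d ρ p n (a n) b := by
        intro x
        rw [hper x]
        exact mul_le_mul_of_nonneg_left
          (aux_probNum_le_partZ d ρ p n (a n) b _) hCpos.le
      have hsum := Finset.sum_le_card_nsmul Finset.univ
        (fun x : Vtx d n => probNum d ρ p n (a n) b (event d ρ p r n η x)) _
        (fun x _ => hxu x)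
      rw [Finset.card_univ, nsmul_eq_mul] at hsum
      refine le_trans hsum (le_of_eq ?_)
      rw [← hCid]
      ring


end

end Ising
end
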